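/- arXiv:1211.3197 — 9 statements merged into one kernel-verified Lean document; each statement's English description precedes it below -/
import Mathlib

section
/- Let A be a Cartan matrix and let f = Σ_{i,j=1}^n λ_{ij} ω_i ω_j with rational coefficients satisfying λ_{ij} = λ_{ji}. Then f is W(A)-invariant if and only if 2λ_{ij} = a_{ij} λ_{jj} for all i, j. -/
open MvPolynomial Matrix

section Defs

variable {ι : Type*} [Fintype ι] [DecidableEq ι]

/-- An integer matrix is a (generalized) Cartan matrix. -/
def IsCartanMatrix (A : Matrix ι ι ℤ) : Prop :=
  (∀ i, A i i = 2) ∧ (∀ i j, i ≠ j → A i j ≤ 0) ∧ ∀ i j, A i j = 0 → A j i = 0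

/-- The simple root `α_i = ∑ j, a_{ji} ω_j`, viewed inside `ℚ[ω_1, …, ω_n]`. -/
noncomputable def simpleRoot (A : Matrix ι ι ℤ) (i : ι) : MvPolynomial ι ℚ :=
  ∑ j, (A j i : ℚ) • X j

/-- The Weyl reflection `σ_i`, the ℚ-algebra endomorphism with `σ_i(ω_j) = ω_j - δ_{ij} α_i`. -/
noncomputable def weylRefl (A : Matrix ι ι ℤ) (i : ι) :
    MvPolynomial ι ℚ →ₐ[ℚ] MvPolynomial ι ℚ :=
  aeval fun j => X j - if j = i then simpleRoot A i else 0

/-- A polynomial is `W(A)`-invariant iff it is fixed by every simple reflection. -/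
def WeylInvariant (A : Matrix ι ι ℤ) (f : MvPolynomial ι ℚ) : Prop :=
  ∀ i, weylRefl A i f = f

/-- Indecomposability of a Cartan matrix. -/
def Indecomposable (A : Matrix ι ι ℤ) : Prop :=
  ¬∃ I J : Set ι, I.Nonempty ∧ J.Nonempty ∧ Disjoint I J ∧ I ∪ J = Set.univ ∧
    ∀ i ∈ I, ∀ j ∈ J, A i j = 0

/-- `A` is symmetrizable: `A = D B` with `D` invertible diagonal and `B` symmetric. -/
def Symmetrizable (A : Matrix ι ι ℤ) : Prop :=
  ∃ (d : ι → ℚ) (B : Matrix ι ι ℚ), (∀ i, d i ≠ 0) ∧ Bᵀ = B ∧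
    A.map (Int.cast : ℤ → ℚ) = Matrix.diagonal d * B

/-- `A` is of finite type: `xᵀ A x > 0` for all nonzero real `x`. -/
def FiniteType (A : Matrix ι ι ℤ) : Prop :=
  ∀ x : ι → ℝ, x ≠ 0 → 0 < x ⬝ᵥ ((A.map (Int.cast : ℤ → ℝ)) *ᵥ x)

/-- `A` is of affine type: positive semidefinite of rank `n - 1`. -/
def AffineType (A : Matrix ι ι ℤ) : Prop :=
  (∀ x : ι → ℝ, 0 ≤ x ⬝ᵥ ((A.map (Int.cast : ℤ → ℝ)) *ᵥ x)) ∧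
    (A.map (Int.cast : ℤ → ℝ)).rank = Fintype.card ι - 1

/-- `A` is of indefinite type: neither finite nor affine type. -/
def IndefiniteType (A : Matrix ι ι ℤ) : Prop := ¬FiniteType A ∧ ¬AffineType A

end Defs


open Finset in
private lemma coeff_lin_aux {n : ℕ} (c : Fin n → ℚ) (i : Fin n) :
    MvPolynomial.coeff (Finsupp.single i 1) (∑ j, c j • (X j : MvPolynomial (Fin n) ℚ)) = c i := by
  simp [coeff_sum, coeff_smul, coeff_X', Finsupp.single_eq_single_iff]

private lemma refl_quadratic_aux {n : ℕ} (A : Matrix (Fin n) (Fin n) ℤ) (lam : Fin n → Fin n → ℚ)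
    (hlam : ∀ i j, lam i j = lam j i) (k : Fin n) :
    weylRefl A k (∑ i, ∑ j, lam i j • (X i * X j : MvPolynomial (Fin n) ℚ)) =
      (∑ i, ∑ j, lam i j • (X i * X j : MvPolynomial (Fin n) ℚ))
        + simpleRoot A k * (lam k k • simpleRoot A k - (2:ℚ) • ∑ i, lam i k • X i) := by
  set α := simpleRoot A k with hα
  set S : MvPolynomial (Fin n) ℚ := ∑ i, lam i k • X i with hS
  simp only [weylRefl, map_sum, _root_.map_smul, _root_.map_mul, aeval_X, ← hα]
  have key : ∀ i j : Fin n,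
      lam i j • ((X i - if i = k then α else 0) * (X j - if j = k then α else 0)) =
      lam i j • (X i * X j : MvPolynomial (Fin n) ℚ)
        - (if j = k then lam i j • (X i * α) else 0)
        - (if i = k then lam i j • (α * X j) else 0)
        + (if j = k then (if i = k then lam i j • (α * α) else 0) else 0) := by
    intro i j
    by_cases hi : i = k <;> by_cases hj : j = k <;>
      simp [hi, hj, smul_sub, sub_mul, mul_sub] <;> ring_nf
  simp only [key, Finset.sum_add_distrib, Finset.sum_sub_distrib,
    Finset.sum_ite_eq', Finset.mem_univ, if_true]
  have h1 : ∑ i : Fin n, lam i k • (X i * α) = S * α := by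
    rw [hS, Finset.sum_mul]; simp [smul_mul_assoc]
  have h2 : ∑ i : Fin n, ∑ j : Fin n, (if i = k then lam i j • (α * X j) else 0)
      = α * S := by
    rw [Finset.sum_comm]
    simp only [Finset.sum_ite_eq', Finset.mem_univ, if_true]
    rw [hS, Finset.mul_sum]
    exact Finset.sum_congr rfl fun j _ => by rw [hlam j k, mul_smul_comm]
  rw [h1, h2]
  have h3 : lam k k • (α * α) = α * (lam k k • α) := by rw [mul_smul_comm]
  rw [h3]
  have h4 : S * α = α * S := mul_comm _ _
  rw [h4]
  have h5 : (2:ℚ) • S = S + S := two_smul ℚ S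
  rw [h5]
  ring

/-- A symmetric quadratic form `∑ λ_{ij} ω_i ω_j` is `W(A)`-invariant iff
`2 λ_{ij} = a_{ij} λ_{jj}` for all `i, j`. -/
theorem quadratic_invariant_iff {n : ℕ}
    (A : Matrix (Fin n) (Fin n) ℤ) (hA : IsCartanMatrix A)
    (lam : Fin n → Fin n → ℚ) (hlam : ∀ i j, lam i j = lam j i) :
    WeylInvariant A (∑ i, ∑ j, lam i j • (X i * X j : MvPolynomial (Fin n) ℚ)) ↔
      ∀ i j, 2 * lam i j = (A i j : ℚ) * lam j j := by
  have hroot : ∀ k, (simpleRoot A k : MvPolynomial (Fin n) ℚ) ≠ 0 := by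
    intro k h
    have := congrArg (MvPolynomial.coeff (Finsupp.single k 1)) h
    rw [simpleRoot, coeff_lin_aux] at this
    simp [hA.1 k] at this
  constructor
  · intro hinv i j
    have h := hinv j
    rw [refl_quadratic_aux A lam hlam j, add_eq_left, mul_eq_zero] at h
    rcases h with h | h
    · exact absurd h (hroot j)
    · rw [sub_eq_zero] at h
      have := congrArg (MvPolynomial.coeff (Finsupp.single i 1)) h
      rw [coeff_smul, coeff_smul, simpleRoot, coeff_lin_aux, coeff_lin_aux] at this
      rw [smul_eq_mul, smul_eq_mul] at this
      linarith [this]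
  · intro h k
    rw [refl_quadratic_aux A lam hlam k, add_eq_left]
    have hz : (lam k k • simpleRoot A k - (2:ℚ) • ∑ i, lam i k • X i
        : MvPolynomial (Fin n) ℚ) = 0 := by
      rw [sub_eq_zero, simpleRoot, Finset.smul_sum, Finset.smul_sum]
      refine Finset.sum_congr rfl fun i _ => ?_
      rw [smul_smul, smul_smul, mul_comm, ← h i k]
    rw [hz, mul_zero]
end

section
/- Let A be an n×n Cartan matrix and let f ∈ ℚ[ω_1,…,ω_n] be homogeneous of degree l with σ_k(f) = f for all k = 1,…,n−1. Writing f = Σ_{i=0}^l f_i·ω_n^{l−i} with each f_i ∈ ℚ[ω_1,…,ω_{n−1}] homogeneous of degree i, the top component f_l is W(A')-invariant: σ'_k(f_l) = f_l for all k = 1,…,n−1. In particular, if f ∈ I(A) then f_l ∈ I(A'). -/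
open MvPolynomial Matrix

/-- The degree-1 element `ω'_n = ∑_{j ≤ n-1} a_{jn} ω_j ∈ ℚ[ω_1, …, ω_{n-1}]`. -/
noncomputable def omegaPrime {n : ℕ} (A : Matrix (Fin (n + 1)) (Fin (n + 1)) ℤ) :
    MvPolynomial (Fin n) ℚ :=
  ∑ j : Fin n, (A j.castSucc (Fin.last n) : ℚ) • X j


/-- The projection `ℚ[ω_1,…,ω_{n+1}] → ℚ[ω_1,…,ω_n]` killing the last variable. -/
noncomputable def projLast {n : ℕ} : MvPolynomial (Fin (n + 1)) ℚ →ₐ[ℚ] MvPolynomial (Fin n) ℚ :=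
  aeval (Fin.lastCases 0 X)

lemma projLast_simpleRoot {n : ℕ} (A : Matrix (Fin (n + 1)) (Fin (n + 1)) ℤ) (k : Fin n) :
    projLast (simpleRoot A k.castSucc) =
      simpleRoot (A.submatrix Fin.castSucc Fin.castSucc) k := by
  simp only [simpleRoot, map_sum, _root_.map_smul, Matrix.submatrix_apply]
  rw [Fin.sum_univ_castSucc]
  simp [projLast]

lemma projLast_weylRefl {n : ℕ} (A : Matrix (Fin (n + 1)) (Fin (n + 1)) ℤ) (k : Fin n)
    (p : MvPolynomial (Fin (n + 1)) ℚ) :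
    projLast (weylRefl A k.castSucc p) =
      weylRefl (A.submatrix Fin.castSucc Fin.castSucc) k (projLast p) := by
  have h : (projLast (n := n)).comp (weylRefl A k.castSucc)
      = (weylRefl (A.submatrix Fin.castSucc Fin.castSucc) k).comp projLast := by
    apply MvPolynomial.algHom_ext
    intro j
    induction j using Fin.lastCases with
    | last =>
        simp [projLast, weylRefl, (Fin.castSucc_lt_last k).ne']
    | cast j =>
        by_cases hj : j = k
        · subst hj
          simp [projLast, weylRefl, ← projLast_simpleRoot A j]
        · simp [projLast, weylRefl, hj, Fin.castSucc_inj]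
  exact DFunLike.congr_fun h p

/-- if a degree-`l` homogeneous polynomial `f = ∑ f_i ω_n^{l-i}` is fixed by
`σ_1, …, σ_{n-1}`, then its top component `f_l` is `W(A')`-invariant, where `A'` is the
upper-left principal submatrix. -/
theorem top_component_invariant {n l : ℕ}
    (A : Matrix (Fin (n + 1)) (Fin (n + 1)) ℤ) (hA : IsCartanMatrix A)
    (f : MvPolynomial (Fin (n + 1)) ℚ) (hfh : f.IsHomogeneous l)
    (hinv : ∀ k : Fin n, weylRefl A k.castSucc f = f)
    (g : ℕ → MvPolynomial (Fin n) ℚ) (hg : ∀ i, (g i).IsHomogeneous i)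
    (hdec : f = ∑ i ∈ Finset.range (l + 1),
      rename Fin.castSucc (g i) * X (Fin.last n) ^ (l - i)) :
    WeylInvariant (A.submatrix Fin.castSucc Fin.castSucc) (g l) := by
  have key : projLast f = g l := by
    rw [hdec, map_sum]
    rw [Finset.sum_eq_single l]
    · rw [Nat.sub_self, pow_zero, mul_one, projLast, aeval_rename]
      have : ((Fin.lastCases 0 X : Fin (n+1) → MvPolynomial (Fin n) ℚ) ∘ Fin.castSucc)
          = (X : Fin n → MvPolynomial (Fin n) ℚ) := by
        funext j; simp [Function.comp]
      rw [this, aeval_X_left, AlgHom.id_apply]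
    · intro i hi hne
      have hlt : i < l := lt_of_le_of_ne (Nat.lt_succ_iff.mp (Finset.mem_range.mp hi)) hne
      have : (l - i) ≠ 0 := Nat.sub_ne_zero_of_lt hlt
      simp [projLast, zero_pow this]
    · intro h
      exact absurd (Finset.self_mem_range_succ l) h
  intro k
  rw [← key, ← projLast_weylRefl, hinv k]
end

section
/- Let A be an n×n Cartan matrix and let f ∈ ℚ[ω_1,…,ω_n] be homogeneous of degree l with σ_k(f) = f for all k = 1,…,n−1. Writing f = Σ_{i=0}^l f_i·ω_n^{l−i} with each f_i ∈ ℚ[ω_1,…,ω_{n−1}] homogeneous of degree i, then for every k ∈ {1,…,n−1} and every 0 ≤ i ≤ l: σ'_k(f_i) = Σ_{j=0}^{l−i} ((−a_{nk})^j / j!) · ∂^j f_{i+j} / ∂ω_k^j. -/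
open MvPolynomial Matrix

namespace CRFaux
open Finset

variable {n : ℕ}

noncomputable def pdIt (k : Fin n) (r : ℕ) :
    MvPolynomial (Fin n) ℚ →ₗ[ℚ] MvPolynomial (Fin n) ℚ :=
  ((pderiv k : Derivation ℚ _ _).toLinearMap) ^ r

lemma pdIt_apply (k : Fin n) (r : ℕ) (p : MvPolynomial (Fin n) ℚ) :
    pdIt k r p = (fun h => pderiv k h)^[r] p := by
  rw [pdIt, Module.End.pow_apply]
  rfl

lemma pdIt_monomial (k : Fin n) (r : ℕ) (m : Fin n →₀ ℕ) (c : ℚ) :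
    pdIt k r (monomial m c) =
      monomial (m - Finsupp.single k r) (c * ((m k).descFactorial r : ℚ)) := by
  induction r generalizing m c with
  | zero => simp [pdIt]
  | succ r ih =>
    have h1 : pdIt k (r + 1) (monomial m c) = pdIt k r (pderiv k (monomial m c)) := by
      rw [pdIt, pdIt, pow_succ, Module.End.mul_apply]; rfl
    rw [h1, pderiv_monomial, ih]
    have h2 : m - Finsupp.single k 1 - Finsupp.single k r = m - Finsupp.single k (r + 1) := by
      ext j
      by_cases hj : j = k <;> simp [hj, Finsupp.single_apply] <;> omega
    have h3 : ((m - Finsupp.single k 1 : Fin n →₀ ℕ)) k = m k - 1 := by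
      rw [Finsupp.tsub_apply, Finsupp.single_eq_same]
    rw [h2, h3]
    congr 1
    have h4 : (m k).descFactorial (r + 1) = m k * (m k - 1).descFactorial r := by
      cases hmk : m k with
      | zero => simp
      | succ a => rw [Nat.succ_descFactorial_succ]; simp
    rw [h4]
    push_cast
    ring

lemma apply_le_sum (m : Fin n →₀ ℕ) (k : Fin n) : m k ≤ m.sum fun _ e => e := by
  by_cases hk : k ∈ m.support
  · exact Finset.single_le_sum (fun j _ => Nat.zero_le _) hk
  · simp [Finsupp.notMem_support_iff.mp hk]

lemma pdIt_eq_zero (k : Fin n) {p : MvPolynomial (Fin n) ℚ} {r : ℕ}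
    (h : p.totalDegree < r) : pdIt k r p = 0 := by
  conv_lhs => rw [← support_sum_monomial_coeff p]
  rw [map_sum]
  refine Finset.sum_eq_zero fun m hm => ?_
  rw [pdIt_monomial]
  have h1 : m k < r :=
    lt_of_le_of_lt (le_trans (apply_le_sum m k) (le_totalDegree hm)) h
  rw [Nat.descFactorial_eq_zero_iff_lt.mpr h1]
  simp

lemma taylor_monomial {S : Type*} [CommRing S] [Algebra ℚ S]
    (φ : MvPolynomial (Fin n) ℚ →ₐ[ℚ] S) (k : Fin n) (t : S)
    (m : Fin n →₀ ℕ) (c : ℚ) (D : ℕ) (hm : m k ≤ D) :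
    aeval (fun j => φ (X j) + if j = k then t else 0) (monomial m c) =
      ∑ r ∈ range (D + 1),
        ((1 : ℚ) / r.factorial) • (t ^ r * φ (pdIt k r (monomial m c))) := by
  have hsplit : ∀ (v : Fin n →₀ ℕ) (F : Fin n → S),
      (∏ j : Fin n, F j ^ v j) = F k ^ v k * ∏ j ∈ univ.erase k, F j ^ v j :=
    fun v F => (Finset.mul_prod_erase univ _ (mem_univ k)).symm
  have hprod : ∀ (v : Fin n →₀ ℕ) (F : Fin n → S),
      (v.prod fun i e => F i ^ e) = ∏ j : Fin n, F j ^ v j :=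
    fun v F => Finsupp.prod_fintype _ _ fun j => pow_zero _
  have hφmon : ∀ (u : Fin n →₀ ℕ) (b : ℚ),
      φ (monomial u b) = algebraMap ℚ S b * ∏ j : Fin n, φ (X j) ^ u j := by
    intro u b
    conv_lhs => rw [MvPolynomial.aeval_unique φ]
    rw [aeval_monomial, hprod]
    rfl
  set P : S := ∏ j ∈ univ.erase k, φ (X j) ^ m j with hP
  have hRHS : ∀ r : ℕ,
      ((1 : ℚ) / r.factorial) • (t ^ r * φ (pdIt k r (monomial m c))) =
        algebraMap ℚ S (c * (m k).choose r) *
          (t ^ r * (φ (X k)) ^ (m k - r) * P) := by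
    intro r
    rw [pdIt_monomial, hφmon, hsplit]
    have he : ∀ j, (m - Finsupp.single k r : Fin n →₀ ℕ) j
        = if j = k then m k - r else m j := by
      intro j
      rcases eq_or_ne j k with hj | hj
      · subst hj; simp [Finsupp.tsub_apply]
      · simp [Finsupp.tsub_apply, Finsupp.single_apply, hj, Ne.symm hj]
    have hprod2 : (∏ j ∈ univ.erase k, φ (X j) ^ (m - Finsupp.single k r : Fin n →₀ ℕ) j)
        = P := by
      refine Finset.prod_congr rfl fun j hj => ?_
      rw [he j, if_neg (Finset.ne_of_mem_erase hj)]
    rw [he k, if_pos rfl, hprod2, Algebra.smul_def]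
    have hq : (1 : ℚ) / r.factorial * (c * ((m k).descFactorial r : ℚ))
        = c * (m k).choose r := by
      rw [Nat.descFactorial_eq_factorial_mul_choose]
      have hfac : (r.factorial : ℚ) ≠ 0 := Nat.cast_ne_zero.mpr r.factorial_ne_zero
      push_cast
      field_simp
    have hq2 : (algebraMap ℚ S) ((1 : ℚ) / r.factorial) *
        (algebraMap ℚ S) (c * ((m k).descFactorial r : ℚ)) =
        (algebraMap ℚ S) (c * (m k).choose r) := by
      rw [← _root_.map_mul, hq]
    linear_combination (t ^ r * φ (X k) ^ (m k - r) * P) * hq2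
  rw [aeval_monomial, hprod, hsplit]
  have hite : ∀ j ∈ univ.erase k,
      (φ (X j) + if j = k then t else 0) ^ m j = φ (X j) ^ m j := by
    intro j hj
    rw [if_neg (Finset.ne_of_mem_erase hj), add_zero]
  rw [Finset.prod_congr rfl hite, ← hP]
  have hk : (φ (X k) + if k = k then t else 0) = t + φ (X k) := by
    rw [if_pos rfl, add_comm]
  rw [hk, add_pow]
  rw [Finset.sum_congr rfl fun r _ => hRHS r]
  rw [← Finset.sum_subset (Finset.range_subset_range.mpr (Nat.add_le_add_right hm 1))
    (fun r _ hr => by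
      rw [Nat.choose_eq_zero_of_lt (by simpa using hr)]
      push_cast
      simp)]
  rw [Finset.sum_mul, Finset.mul_sum]
  refine Finset.sum_congr rfl fun r _ => ?_
  rw [_root_.map_mul, map_natCast]
  ring

lemma taylor_expand {S : Type*} [CommRing S] [Algebra ℚ S]
    (φ : MvPolynomial (Fin n) ℚ →ₐ[ℚ] S) (k : Fin n) (t : S)
    (p : MvPolynomial (Fin n) ℚ) (D : ℕ) (hp : p.totalDegree ≤ D) :
    aeval (fun j => φ (X j) + if j = k then t else 0) p =
      ∑ r ∈ range (D + 1),
        ((1 : ℚ) / r.factorial) • (t ^ r * φ (pdIt k r p)) := by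
  conv_lhs => rw [← support_sum_monomial_coeff p]
  rw [map_sum]
  have : ∀ r ∈ range (D + 1),
      ((1 : ℚ) / r.factorial) • (t ^ r * φ (pdIt k r p)) =
        ∑ m ∈ p.support,
          ((1 : ℚ) / r.factorial) • (t ^ r * φ (pdIt k r (monomial m (coeff m p)))) := by
    intro r _
    conv_lhs => rw [← support_sum_monomial_coeff p]
    rw [map_sum, map_sum, Finset.mul_sum, Finset.smul_sum]
  rw [Finset.sum_congr rfl this, Finset.sum_comm]
  refine Finset.sum_congr rfl fun m hm => ?_
  exact taylor_monomial φ k t m (coeff m p) D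
    (le_trans (le_trans (apply_le_sum m k) (le_totalDegree hm)) hp)

lemma sum_reindex {M : Type*} [AddCommMonoid M] (l : ℕ) (T : ℕ → ℕ → M) :
    ∑ i ∈ range (l + 1), ∑ r ∈ range (i + 1), T i r
      = ∑ m ∈ range (l + 1), ∑ r ∈ range (l - m + 1), T (m + r) r := by
  rw [Finset.sum_sigma', Finset.sum_sigma']
  refine Finset.sum_bij' (fun x _ => (⟨x.1 - x.2, x.2⟩ : Σ _ : ℕ, ℕ))
    (fun x _ => (⟨x.1 + x.2, x.2⟩ : Σ _ : ℕ, ℕ)) ?_ ?_ ?_ ?_ ?_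
  · rintro ⟨i, r⟩ hx
    simp only [Finset.mem_sigma, Finset.mem_range] at hx ⊢
    omega
  · rintro ⟨m, r⟩ hx
    simp only [Finset.mem_sigma, Finset.mem_range] at hx ⊢
    omega
  · rintro ⟨i, r⟩ hx
    simp only [Finset.mem_sigma, Finset.mem_range] at hx
    obtain ⟨h1, h2⟩ := hx
    have : i - r + r = i := by omega
    simp [this]
  · rintro ⟨m, r⟩ hx
    simp only [Finset.mem_sigma, Finset.mem_range] at hx
    obtain ⟨h1, h2⟩ := hx
    have : m + r - r = m := by omega
    simp [this]
  · rintro ⟨i, r⟩ hx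
    simp only [Finset.mem_sigma, Finset.mem_range] at hx
    have : i - r + r = i := by omega
    rw [this]

noncomputable def Φ : MvPolynomial (Fin (n + 1)) ℚ ≃ₐ[ℚ] Polynomial (MvPolynomial (Fin n) ℚ) :=
  (renameEquiv ℚ (finRotate (n + 1))).trans (MvPolynomial.finSuccEquiv ℚ n)

lemma Φ_term (u : MvPolynomial (Fin n) ℚ) (d : ℕ) :
    Φ (rename Fin.castSucc u * X (Fin.last n) ^ d) = Polynomial.C u * Polynomial.X ^ d := by
  rw [_root_.map_mul, map_pow]
  have h1 : Φ (X (Fin.last n)) = (Polynomial.X : Polynomial (MvPolynomial (Fin n) ℚ)) := by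
    rw [Φ]
    simp only [AlgEquiv.trans_apply, renameEquiv_apply, rename_X, finRotate_last]
    exact finSuccEquiv_X_zero
  have h2 : Φ (rename Fin.castSucc u) = Polynomial.C u := by
    rw [Φ]
    simp only [AlgEquiv.trans_apply, renameEquiv_apply]
    rw [rename_rename]
    have hc : (⇑(finRotate (n + 1)) ∘ Fin.castSucc : Fin n → Fin (n + 1)) = Fin.succ := by
      funext j
      simp only [Function.comp_apply, finRotate_succ_apply]
      exact Fin.coeSucc_eq_succ
    rw [hc]
    induction u using MvPolynomial.induction_on with
    | C a => simp [finSuccEquiv_apply]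
    | add p q hp hq => rw [map_add, map_add, hp, hq, map_add]
    | mul_X p j hp => rw [_root_.map_mul, _root_.map_mul, hp, rename_X, finSuccEquiv_X_succ, _root_.map_mul]
  rw [h1, h2]

lemma components_unique {l : ℕ} (p q : ℕ → MvPolynomial (Fin n) ℚ)
    (h : ∑ i ∈ range (l + 1), rename Fin.castSucc (p i) * X (Fin.last n) ^ (l - i)
       = ∑ i ∈ range (l + 1), rename Fin.castSucc (q i) * X (Fin.last n) ^ (l - i)) :
    ∀ i ≤ l, p i = q i := by
  intro i0 hi0
  have h2 := congrArg (⇑(Φ (n := n))) h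
  rw [map_sum, map_sum] at h2
  simp only [Φ_term] at h2
  have h3 := congrArg (fun q => Polynomial.coeff q (l - i0)) h2
  simp only [Polynomial.finset_sum_coeff, Polynomial.coeff_C_mul,
    Polynomial.coeff_X_pow] at h3
  have key : ∀ w : ℕ → MvPolynomial (Fin n) ℚ,
      (∑ i ∈ range (l + 1), w i * if l - i0 = l - i then 1 else 0) = w i0 := by
    intro w
    rw [Finset.sum_eq_single i0]
    · rw [if_pos rfl, mul_one]
    · intro i hi hne
      rw [Finset.mem_range] at hi
      rw [if_neg (by omega), mul_zero]
    · intro hmem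
      exact absurd (Finset.mem_range.mpr (by omega)) hmem
  rw [key, key] at h3
  exact h3

lemma weylRefl_sq (B : Matrix (Fin n) (Fin n) ℤ) (k : Fin n) (hB : B k k = 2)
    (u : MvPolynomial (Fin n) ℚ) : weylRefl B k (weylRefl B k u) = u := by
  have hXne : ∀ j : Fin n, j ≠ k → weylRefl B k (X j) = X j := by
    intro j hj
    rw [weylRefl, aeval_X, if_neg hj, sub_zero]
  have hXk : weylRefl B k (X k) = X k - simpleRoot B k := by
    rw [weylRefl, aeval_X, if_pos rfl]
  have hroot : weylRefl B k (simpleRoot B k) = - simpleRoot B k := by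
    rw [simpleRoot, map_sum]
    have : ∀ j : Fin n, weylRefl B k ((B j k : ℚ) • X j)
        = (B j k : ℚ) • X j - (if j = k then (B j k : ℚ) • simpleRoot B k else 0) := by
      intro j
      rw [_root_.map_smul]
      by_cases hj : j = k
      · subst hj
        rw [hXk, if_pos rfl, smul_sub]
      · rw [hXne j hj, if_neg hj, sub_zero]
    rw [Finset.sum_congr rfl fun j _ => this j, Finset.sum_sub_distrib,
      ← simpleRoot, Finset.sum_ite_eq' univ k _, if_pos (mem_univ k), hB]
    push_cast
    module
  have hX2 : ∀ j : Fin n, weylRefl B k (weylRefl B k (X j)) = X j := by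
    intro j
    by_cases hj : j = k
    · subst hj
      rw [hXk, map_sub, hXk, hroot]
      ring
    · rw [hXne j hj, hXne j hj]
  induction u using MvPolynomial.induction_on with
  | C a =>
    rw [show (C a : MvPolynomial (Fin n) ℚ) = algebraMap ℚ _ a from rfl,
      AlgHom.commutes, AlgHom.commutes]
  | add p q hp hq => rw [map_add, map_add, hp, hq]
  | mul_X p j hp => rw [_root_.map_mul, _root_.map_mul, hp, hX2 j]

end CRFaux

/-- if a degree-`l` homogeneous polynomial `f = ∑ f_i ω_n^{l-i}` is fixed by
`σ_1, …, σ_{n-1}`, then `σ'_k(f_i) = ∑_{j=0}^{l-i} ((-a_{nk})^j / j!) ∂^j f_{i+j} / ∂ω_k^j`. -/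
theorem components_reflection_formula {n l : ℕ}
    (A : Matrix (Fin (n + 1)) (Fin (n + 1)) ℤ) (hA : IsCartanMatrix A)
    (f : MvPolynomial (Fin (n + 1)) ℚ) (hfh : f.IsHomogeneous l)
    (hinv : ∀ k : Fin n, weylRefl A k.castSucc f = f)
    (g : ℕ → MvPolynomial (Fin n) ℚ) (hg : ∀ i, (g i).IsHomogeneous i)
    (hdec : f = ∑ i ∈ Finset.range (l + 1),
      rename Fin.castSucc (g i) * X (Fin.last n) ^ (l - i)) :
    ∀ k : Fin n, ∀ i ≤ l,
      weylRefl (A.submatrix Fin.castSucc Fin.castSucc) k (g i) =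
        ∑ j ∈ Finset.range (l - i + 1),
          ((-(A (Fin.last n) k.castSucc : ℚ)) ^ j / (Nat.factorial j : ℚ)) •
            (fun h => pderiv k h)^[j] (g (i + j)) := by
  intro k i0 hi0
  classical
  set c : ℚ := (A (Fin.last n) k.castSucc : ℚ) with hc
  set A' : Matrix (Fin n) (Fin n) ℤ := A.submatrix Fin.castSucc Fin.castSucc with hA'
  set σ' : MvPolynomial (Fin n) ℚ →ₐ[ℚ] MvPolynomial (Fin n) ℚ := weylRefl A' k with hσ'
  set t : MvPolynomial (Fin (n + 1)) ℚ := (-c) • X (Fin.last n) with ht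
  set φ : MvPolynomial (Fin n) ℚ →ₐ[ℚ] MvPolynomial (Fin (n + 1)) ℚ :=
    ((rename (Fin.castSucc : Fin n → Fin (n + 1)) :
      MvPolynomial (Fin n) ℚ →ₐ[ℚ] MvPolynomial (Fin (n + 1)) ℚ)).comp σ' with hφ
  have hroot : simpleRoot A k.castSucc
      = rename Fin.castSucc (simpleRoot A' k) + c • X (Fin.last n) := by
    rw [simpleRoot, simpleRoot, map_sum, Fin.sum_univ_castSucc]
    congr 1
    refine Finset.sum_congr rfl fun j _ => ?_
    rw [_root_.map_smul, rename_X, hA', submatrix_apply]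
  have hcomp : (weylRefl A k.castSucc).comp
      (rename (Fin.castSucc : Fin n → Fin (n + 1)) :
        MvPolynomial (Fin n) ℚ →ₐ[ℚ] MvPolynomial (Fin (n + 1)) ℚ)
      = aeval (fun j => φ (X j) + if j = k then t else 0) := by
    apply MvPolynomial.algHom_ext
    intro j
    rw [AlgHom.comp_apply, rename_X, aeval_X, weylRefl, aeval_X]
    by_cases hj : j = k
    · subst hj
      rw [if_pos rfl, if_pos rfl, hroot, hφ, AlgHom.comp_apply, hσ', weylRefl, aeval_X,
        if_pos rfl, map_sub, rename_X, ht]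
      module
    · rw [if_neg (by simpa [Fin.castSucc_inj] using hj), if_neg hj, add_zero, sub_zero,
        hφ, AlgHom.comp_apply, hσ', weylRefl, aeval_X, if_neg hj, sub_zero, rename_X]
  have hXlast : weylRefl A k.castSucc (X (Fin.last n)) = X (Fin.last n) := by
    rw [weylRefl, aeval_X, if_neg (Fin.castSucc_lt_last k).ne', sub_zero]
  have key : ∀ i : ℕ,
      weylRefl A k.castSucc (rename Fin.castSucc (g i) * X (Fin.last n) ^ (l - i))
      = ∑ r ∈ Finset.range (i + 1),
          ((-c) ^ r / r.factorial) •
            (rename Fin.castSucc (σ' (CRFaux.pdIt k r (g i))) *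
              X (Fin.last n) ^ (l - i + r)) := by
    intro i
    rw [_root_.map_mul, map_pow, hXlast]
    have h1 : weylRefl A k.castSucc (rename Fin.castSucc (g i))
        = aeval (fun j => φ (X j) + if j = k then t else 0) (g i) := by
      rw [← hcomp, AlgHom.comp_apply]
    rw [h1, CRFaux.taylor_expand φ k t (g i) i ((hg i).totalDegree_le), Finset.sum_mul]
    refine Finset.sum_congr rfl fun r _ => ?_
    rw [hφ, AlgHom.comp_apply, ht, pow_add]
    simp only [smul_eq_C_mul, smul_pow, _root_.map_pow]
    rw [div_eq_mul_one_div ((-c) ^ r) (r.factorial : ℚ), _root_.map_mul, _root_.map_pow]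
    ring
  have hf2 : f = ∑ m ∈ Finset.range (l + 1), ∑ r ∈ Finset.range (l - m + 1),
      ((-c) ^ r / r.factorial) •
        (rename Fin.castSucc (σ' (CRFaux.pdIt k r (g (m + r)))) *
          X (Fin.last n) ^ (l - (m + r) + r)) := by
    conv_lhs => rw [← hinv k, hdec, map_sum]
    rw [Finset.sum_congr rfl fun i _ => key i]
    exact CRFaux.sum_reindex l fun i r => ((-c) ^ r / r.factorial) •
      (rename Fin.castSucc (σ' (CRFaux.pdIt k r (g i))) * X (Fin.last n) ^ (l - i + r))
  set hfun : ℕ → MvPolynomial (Fin n) ℚ := fun m =>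
    ∑ r ∈ Finset.range (l - m + 1),
      ((-c) ^ r / r.factorial) • σ' (CRFaux.pdIt k r (g (m + r))) with hhfun
  have hf3 : f = ∑ m ∈ Finset.range (l + 1),
      rename Fin.castSucc (hfun m) * X (Fin.last n) ^ (l - m) := by
    rw [hf2]
    refine Finset.sum_congr rfl fun m hm => ?_
    rw [Finset.mem_range] at hm
    rw [hhfun]
    simp only []
    rw [map_sum, Finset.sum_mul]
    refine Finset.sum_congr rfl fun r hr => ?_
    rw [Finset.mem_range] at hr
    have hexp : l - (m + r) + r = l - m := by omega
    rw [hexp, _root_.map_smul, smul_mul_assoc]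
  have hg_eq : g i0 = hfun i0 :=
    CRFaux.components_unique g hfun (hdec.symm.trans hf3) i0 hi0
  have hkk : A' k k = 2 := by
    rw [hA', submatrix_apply]
    exact hA.1 _
  rw [hg_eq, hhfun]
  simp only []
  rw [map_sum]
  refine Finset.sum_congr rfl fun r _ => ?_
  rw [_root_.map_smul, hσ', CRFaux.weylRefl_sq A' k hkk, CRFaux.pdIt_apply]
end

section
/- Let A be an n×n indecomposable, symmetrizable Cartan matrix of indefinite type whose upper-left (n−1)×(n−1) principal submatrix A' is also indecomposable and symmetrizable, and let ψ be a nonzero element of I²(A). Then the polynomial ψ' obtained from ψ by the substitution ω_n ↦ 0 is a nonzero element of I²(A'). -/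
open MvPolynomial Matrix

section Aux2
set_option linter.unusedSectionVars false

variable {ι : Type*} [Fintype ι] [DecidableEq ι]


variable {ι : Type*} [Fintype ι] [DecidableEq ι]

lemma single_add_single_eq {k l p q : ι}
    (h : Finsupp.single k 1 + Finsupp.single l 1 = Finsupp.single p 1 + Finsupp.single q 1) :
    (k = p ∧ l = q) ∨ (k = q ∧ l = p) := by
  by_cases hkp : k = p
  · subst hkp
    left
    exact ⟨rfl, (Finsupp.single_left_inj one_ne_zero).mp (add_left_cancel h)⟩
  · have hlp : l = p := by
      by_contra hlp
      have hp := DFunLike.congr_fun h p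
      simp [Finsupp.single_apply, hkp, hlp] at hp
      split at hp <;> omega
    subst hlp
    right
    refine ⟨?_, rfl⟩
    have h' : Finsupp.single l 1 + Finsupp.single k 1 =
        Finsupp.single l 1 + Finsupp.single q 1 := by
      rw [add_comm (Finsupp.single l 1) (Finsupp.single k 1), h, add_comm]
    exact (Finsupp.single_left_inj one_ne_zero).mp (add_left_cancel h')

lemma exists_pair_of_degree_two {d : ι →₀ ℕ} (h : Finsupp.degree d = 2) :
    ∃ k l : ι, d = Finsupp.single k 1 + Finsupp.single l 1 := by
  classical
  have hcard : d.support.card ≤ 2 := by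
    have h1 : d.support.card = ∑ i ∈ d.support, 1 := by simp
    have h2 : ∑ i ∈ d.support, 1 ≤ ∑ i ∈ d.support, d i := by
      apply Finset.sum_le_sum
      intro i hi
      have := Finsupp.mem_support_iff.mp hi
      omega
    rw [Finsupp.degree_apply] at h
    omega
  have hne : d.support.Nonempty := by
    rw [Finset.nonempty_iff_ne_empty]
    intro hemp
    rw [Finsupp.degree_apply, hemp] at h
    simp at h
  have hpos : 0 < d.support.card := Finset.card_pos.mpr hne
  interval_cases hc : d.support.card
  · obtain ⟨k, hk⟩ := Finset.card_eq_one.mp hc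
    have hdk : d k = 2 := by
      rw [Finsupp.degree_apply, hk, Finset.sum_singleton] at h
      exact h
    refine ⟨k, k, ?_⟩
    ext a
    by_cases hak : a = k
    · subst hak; simp [hdk]
    · have : a ∉ d.support := by rw [hk]; simp [hak]
      simp only [Finsupp.notMem_support_iff] at this
      simp [this, Finsupp.single_apply, Ne.symm hak, hak]
  · obtain ⟨k, l, hkl, hs⟩ := Finset.card_eq_two.mp hc
    have hsum : d k + d l = 2 := by
      rw [Finsupp.degree_apply, hs, Finset.sum_pair hkl] at h
      exact h
    have hk1 : d k ≠ 0 := Finsupp.mem_support_iff.mp (by rw [hs]; simp)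
    have hl1 : d l ≠ 0 := Finsupp.mem_support_iff.mp (by rw [hs]; simp)
    have hdk : d k = 1 := by omega
    have hdl : d l = 1 := by omega
    refine ⟨k, l, ?_⟩
    ext a
    by_cases hak : a = k
    · subst hak; simp [hdk, Finsupp.single_apply, hkl, Ne.symm hkl]
    · by_cases hal : a = l
      · subst hal; simp [hdl, Finsupp.single_apply, hkl, Ne.symm hkl]
      · have : a ∉ d.support := by rw [hs]; simp [hak, hal]
        simp only [Finsupp.notMem_support_iff] at this
        simp [this, Finsupp.single_apply, Ne.symm hak, Ne.symm hal]

noncomputable def quadForm (m : ι → ι → ℚ) : MvPolynomial ι ℚ :=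
  ∑ k, ∑ l, m k l • (X k * X l)

lemma X_mul_X_eq (k l : ι) : (X k * X l : MvPolynomial ι ℚ) =
    monomial (Finsupp.single k 1 + Finsupp.single l 1) 1 := by
  rw [X, X, monomial_mul, one_mul]

lemma coeff_quadForm (m : ι → ι → ℚ) (D : ι →₀ ℕ) :
    coeff D (quadForm m) = ∑ k, ∑ l,
      (if Finsupp.single k 1 + Finsupp.single l 1 = D then m k l else 0) := by
  unfold quadForm
  rw [coeff_sum]
  refine Finset.sum_congr rfl fun k _ => ?_
  rw [coeff_sum]
  refine Finset.sum_congr rfl fun l _ => ?_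
  rw [coeff_smul, X_mul_X_eq, coeff_monomial]
  simp [smul_eq_mul]

lemma coeff_quadForm_diag (m : ι → ι → ℚ) (p : ι) :
    coeff (Finsupp.single p 2) (quadForm m) = m p p := by
  have h2 : (Finsupp.single p 2 : ι →₀ ℕ) = Finsupp.single p 1 + Finsupp.single p 1 := by
    rw [← Finsupp.single_add]
  rw [h2, coeff_quadForm]
  rw [Finset.sum_eq_single p]
  · rw [Finset.sum_eq_single p]
    · simp
    · intro l _ hl
      rw [if_neg]
      intro hc
      rcases single_add_single_eq hc with ⟨_, h⟩ | ⟨_, h⟩ <;> exact hl h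
    · intro h; exact absurd (Finset.mem_univ p) h
  · intro k _ hk
    apply Finset.sum_eq_zero
    intro l _
    rw [if_neg]
    intro hc
    rcases single_add_single_eq hc with ⟨h, _⟩ | ⟨h, _⟩ <;> exact hk h
  · intro h; exact absurd (Finset.mem_univ p) h

lemma coeff_quadForm_offdiag (m : ι → ι → ℚ) {p q : ι} (hpq : p ≠ q) :
    coeff (Finsupp.single p 1 + Finsupp.single q 1) (quadForm m) = m p q + m q p := by
  rw [coeff_quadForm]
  have key : ∀ k l : ι,
      (if Finsupp.single k 1 + Finsupp.single l 1 = Finsupp.single p 1 + Finsupp.single q 1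
        then m k l else 0)
      = (if k = p then (if l = q then m k l else 0) else 0)
        + (if k = q then (if l = p then m k l else 0) else 0) := by
    intro k l
    by_cases h1 : k = p ∧ l = q
    · obtain ⟨rfl, rfl⟩ := h1
      simp [hpq, Ne.symm hpq]
    · by_cases h2 : k = q ∧ l = p
      · obtain ⟨rfl, rfl⟩ := h2
        rw [if_pos (add_comm _ _)]
        simp [hpq, Ne.symm hpq]
      · rw [if_neg (fun hc => by
          rcases single_add_single_eq hc with h | h
          exacts [h1 h, h2 h])]
        split_ifs <;> simp_all
  have s1 : ∀ (a b : ι) (f : ι → ι → ℚ),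
      (∑ x : ι, ∑ y : ι, if x = a then if y = b then f x y else 0 else 0) = f a b := by
    intro a b f
    rw [Finset.sum_eq_single a]
    · simp [Finset.sum_ite_eq']
    · intro x _ hx
      simp [hx]
    · intro h; exact absurd (Finset.mem_univ a) h
  simp only [key, Finset.sum_add_distrib, s1]

lemma quadForm_isHomogeneous (m : ι → ι → ℚ) : (quadForm m).IsHomogeneous 2 := by
  rw [← mem_homogeneousSubmodule]
  apply Submodule.sum_mem
  intro k _
  apply Submodule.sum_mem
  intro l _
  apply Submodule.smul_mem
  rw [mem_homogeneousSubmodule]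
  exact (isHomogeneous_X ℚ k).mul (isHomogeneous_X ℚ l)

/-- The canonical coefficient matrix of a quadratic polynomial. -/
noncomputable def coeffM (ψ : MvPolynomial ι ℚ) (k l : ι) : ℚ :=
  if k = l then coeff (Finsupp.single k 2) ψ
  else coeff (Finsupp.single k 1 + Finsupp.single l 1) ψ / 2

lemma coeffM_symm (ψ : MvPolynomial ι ℚ) (k l : ι) : coeffM ψ k l = coeffM ψ l k := by
  unfold coeffM
  by_cases h : k = l
  · subst h; simp
  · rw [if_neg h, if_neg (Ne.symm h), add_comm]

lemma eq_quadForm {ψ : MvPolynomial ι ℚ} (h : ψ.IsHomogeneous 2) :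
    ψ = quadForm (coeffM ψ) := by
  ext D
  by_cases hD : Finsupp.degree D = 2
  · obtain ⟨k, l, rfl⟩ := exists_pair_of_degree_two hD
    by_cases hkl : k = l
    · subst hkl
      rw [← Finsupp.single_add, coeff_quadForm_diag, coeffM]
      simp
    · rw [coeff_quadForm_offdiag _ hkl, coeffM, coeffM, if_neg hkl, if_neg (Ne.symm hkl),
        add_comm (Finsupp.single l 1) (Finsupp.single k 1)]
      ring
  · rw [h.coeff_eq_zero hD, (quadForm_isHomogeneous (coeffM ψ)).coeff_eq_zero hD]

lemma coeff_linear (q : ι → ℚ) (j : ι) :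
    coeff (Finsupp.single j 1) (∑ k, q k • (X k : MvPolynomial ι ℚ)) = q j := by
  rw [coeff_sum]
  rw [Finset.sum_eq_single j]
  · rw [coeff_smul]; simp
  · intro k _ hk
    rw [coeff_smul, coeff_X']
    rw [if_neg (by rwa [Finsupp.single_left_inj one_ne_zero])]
    simp
  · intro h; exact absurd (Finset.mem_univ j) h

lemma coeff_simpleRoot' (A : Matrix ι ι ℤ) (i j : ι) :
    coeff (Finsupp.single j 1) ((∑ k, ((A k i : ℚ)) • (X k : MvPolynomial ι ℚ))) = A j i :=
  coeff_linear _ j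


lemma weylRefl_fixed_iff (A : Matrix ι ι ℤ) (i : ι) (h2 : A i i = 2)
    {ψ : MvPolynomial ι ℚ} (hψ : ψ.IsHomogeneous 2) :
    weylRefl A i ψ = ψ ↔ ∀ j, j ≠ i →
      coeff (Finsupp.single i 1 + Finsupp.single j 1) ψ
        = (A j i : ℚ) * coeff (Finsupp.single i 2) ψ := by
  classical
  set m := coeffM ψ with hm
  set α := simpleRoot A i with hα
  set L : MvPolynomial ι ℚ := ∑ l, m i l • X l with hL
  have hσX : ∀ k, weylRefl A i (X k) = X k - (if k = i then α else 0) := by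
    intro k
    rw [weylRefl, aeval_X]
  have hα0 : α ≠ 0 := by
    intro h0
    have h1 := congrArg (coeff (Finsupp.single i 1)) h0
    rw [hα, simpleRoot, coeff_simpleRoot', coeff_zero] at h1
    rw [h2] at h1
    norm_num at h1
  have expand : weylRefl A i (quadForm m) =
      quadForm m - L * α - α * L + C (m i i) * (α * α) := by
    have e1 : weylRefl A i (quadForm m) = ∑ k, ∑ l, ((C (m k l) * (X k * X l))
        - C (m k l) * (X k * (if l = i then α else 0))
        - C (m k l) * ((if k = i then α else 0) * X l)
        + C (m k l) * ((if k = i then α else 0) * (if l = i then α else 0))) := by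
      unfold quadForm
      rw [map_sum]
      refine Finset.sum_congr rfl fun k _ => ?_
      rw [map_sum]
      refine Finset.sum_congr rfl fun l _ => ?_
      rw [_root_.map_smul, _root_.map_mul, hσX, hσX, smul_eq_C_mul]
      ring
    have S0 : (∑ k : ι, ∑ l : ι, C (m k l) * (X k * X l)) = quadForm m := by
      unfold quadForm
      simp [smul_eq_C_mul]
    have S1 : (∑ k : ι, ∑ l : ι, C (m k l) * (X k * (if l = i then α else 0))) = L * α := by
      have inner : ∀ k : ι, (∑ l : ι, C (m k l) * (X k * (if l = i then α else 0)))
          = C (m k i) * (X k * α) := by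
        intro k
        rw [Finset.sum_eq_single i]
        · rw [if_pos rfl]
        · intro l _ hl; rw [if_neg hl, mul_zero, mul_zero]
        · intro h; exact absurd (Finset.mem_univ i) h
      rw [Finset.sum_congr rfl fun k _ => inner k, hL, Finset.sum_mul]
      refine Finset.sum_congr rfl fun k _ => ?_
      rw [smul_eq_C_mul, hm, coeffM_symm ψ k i]
      ring
    have S2 : (∑ k : ι, ∑ l : ι, C (m k l) * ((if k = i then α else 0) * X l)) = α * L := by
      rw [Finset.sum_eq_single i]
      · rw [hL, Finset.mul_sum]
        refine Finset.sum_congr rfl fun l _ => ?_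
        rw [if_pos rfl, smul_eq_C_mul]
        ring
      · intro k _ hk
        apply Finset.sum_eq_zero
        intro l _
        rw [if_neg hk, zero_mul, mul_zero]
      · intro h; exact absurd (Finset.mem_univ i) h
    have S3 : (∑ k : ι, ∑ l : ι,
        C (m k l) * ((if k = i then α else 0) * (if l = i then α else 0)))
        = C (m i i) * (α * α) := by
      rw [Finset.sum_eq_single i]
      · rw [Finset.sum_eq_single i]
        · rw [if_pos rfl]
        · intro l _ hl; rw [if_neg hl, mul_zero, mul_zero]
        · intro h; exact absurd (Finset.mem_univ i) h
      · intro k _ hk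
        apply Finset.sum_eq_zero
        intro l _
        rw [if_neg hk, zero_mul, mul_zero]
      · intro h; exact absurd (Finset.mem_univ i) h
    rw [e1]
    simp only [Finset.sum_add_distrib, Finset.sum_sub_distrib]
    rw [S0, S1, S2, S3]
  have hCF : ψ = quadForm m := eq_quadForm hψ
  have factor : weylRefl A i ψ - ψ = α * (C (m i i) * α - C 2 * L) := by
    have hC2 : (C (2:ℚ) : MvPolynomial ι ℚ) = 2 := by
      simp [map_ofNat]
    conv_lhs => rw [hCF]
    rw [expand, hC2]
    ring
  have iff1 : weylRefl A i ψ = ψ ↔ C (m i i) * α - C 2 * L = 0 := by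
    rw [← sub_eq_zero, factor, mul_eq_zero]
    simp [hα0]
  have keyeq : C (m i i) * α - C 2 * L
      = ∑ j, ((m i i * (A j i : ℚ)) - 2 * m i j) • (X j : MvPolynomial ι ℚ) := by
    rw [hα, simpleRoot, hL, Finset.mul_sum, Finset.mul_sum, ← Finset.sum_sub_distrib]
    refine Finset.sum_congr rfl fun j _ => ?_
    rw [smul_eq_C_mul, smul_eq_C_mul, smul_eq_C_mul, _root_.map_sub, _root_.map_mul, _root_.map_mul]
    ring
  have iff2 : (∑ j, ((m i i * (A j i : ℚ)) - 2 * m i j) • (X j : MvPolynomial ι ℚ)) = 0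
      ↔ ∀ j, m i i * (A j i : ℚ) - 2 * m i j = 0 := by
    constructor
    · intro h0 j
      have h1 := congrArg (coeff (Finsupp.single j 1)) h0
      rwa [coeff_linear, coeff_zero] at h1
    · intro h0
      apply Finset.sum_eq_zero
      intro j _
      rw [h0 j, zero_smul]
  rw [iff1, keyeq, iff2]
  have hmii : m i i = coeff (Finsupp.single i 2) ψ := by rw [hm, coeffM, if_pos rfl]
  have hmij : ∀ j, j ≠ i → m i j
      = coeff (Finsupp.single i 1 + Finsupp.single j 1) ψ / 2 := by
    intro j hj
    rw [hm, coeffM, if_neg (Ne.symm hj)]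
  constructor
  · intro h j hj
    have h1 := h j
    rw [hmii, hmij j hj] at h1
    linarith
  · intro h j
    by_cases hj : j = i
    · subst hj
      rw [h2, hmii]
      push_cast
      ring
    · rw [hmii, hmij j hj, h j hj]
      ring

end Aux2

/-- for `A` indecomposable, symmetrizable, indefinite with `A'` (the upper-left
principal submatrix) indecomposable and symmetrizable, the restriction `ψ' = ψ|_{ω_n = 0}` of a
nonzero invariant quadratic form `ψ ∈ I²(A)` is a nonzero element of `I²(A')`. -/
theorem restriction_of_invariant_form {n : ℕ}
    (A : Matrix (Fin (n + 1)) (Fin (n + 1)) ℤ) (hA : IsCartanMatrix A)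
    (hind : Indecomposable A) (hsym : Symmetrizable A) (hidf : IndefiniteType A)
    (hind' : Indecomposable (A.submatrix Fin.castSucc Fin.castSucc))
    (hsym' : Symmetrizable (A.submatrix Fin.castSucc Fin.castSucc))
    (ψ : MvPolynomial (Fin (n + 1)) ℚ) (hψ0 : ψ ≠ 0) (hψh : ψ.IsHomogeneous 2)
    (hψinv : WeylInvariant A ψ)
    (ψ' : MvPolynomial (Fin n) ℚ)
    (hψ' : ψ' = aeval (Fin.snoc X 0 : Fin (n + 1) → MvPolynomial (Fin n) ℚ) ψ) :
    ψ' ≠ 0 ∧ ψ'.IsHomogeneous 2 ∧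
      WeylInvariant (A.submatrix Fin.castSucc Fin.castSucc) ψ' := by
  classical
  have h2 := hA.1
  set c : Fin (n + 1) → ℚ := fun i => coeff (Finsupp.single i 2) ψ with hc
  have hrel : ∀ i j, j ≠ i →
      coeff (Finsupp.single i 1 + Finsupp.single j 1) ψ = (A j i : ℚ) * c i := by
    intro i j hj
    exact (weylRefl_fixed_iff A i (h2 i) hψh).mp (hψinv i) j hj
  have hbsymm : ∀ i j : Fin (n + 1), coeff (Finsupp.single i 1 + Finsupp.single j 1) ψ
      = coeff (Finsupp.single j 1 + Finsupp.single i 1) ψ := by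
    intro i j
    exact congrArg (fun D => coeff D ψ) (add_comm _ _)
  have hexc : ∃ i, c i ≠ 0 := by
    by_contra hall
    push_neg at hall
    apply hψ0
    rw [eq_quadForm hψh]
    have hz : ∀ k l, coeffM ψ k l = 0 := by
      intro k l
      by_cases hkl : k = l
      · subst hkl; rw [coeffM, if_pos rfl]; exact hall k
      · rw [coeffM, if_neg hkl, hrel k l (Ne.symm hkl), hall k, mul_zero, zero_div]
    unfold quadForm
    apply Finset.sum_eq_zero
    intro k _
    apply Finset.sum_eq_zero
    intro l _
    rw [hz k l, zero_smul]
  have hcall : ∀ i, c i ≠ 0 := by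
    by_contra hnot
    push_neg at hnot
    obtain ⟨i0, hi0⟩ := hnot
    obtain ⟨i1, hi1⟩ := hexc
    apply hind
    refine ⟨{i | c i ≠ 0}, {i | c i = 0}, ⟨i1, hi1⟩, ⟨i0, hi0⟩, ?_, ?_, ?_⟩
    · rw [Set.disjoint_left]
      intro a ha hb
      exact ha hb
    · ext a
      by_cases h : c a = 0 <;> simp [h]
    · intro i hi j hj
      simp only [Set.mem_setOf_eq] at hi hj
      have hij : i ≠ j := fun h => hi (h ▸ hj)
      have e3 : (A j i : ℚ) * c i = 0 := by
        rw [← hrel i j (Ne.symm hij), hbsymm i j, hrel j i hij, hj, mul_zero]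
      have hAji : A j i = 0 := by
        rcases mul_eq_zero.mp e3 with h | h
        · exact_mod_cast h
        · exact absurd h hi
      exact hA.2.2 j i hAji
  have hn0 : n ≠ 0 := by
    rintro rfl
    apply hidf.1
    intro x hx
    have hx0 : x 0 ≠ 0 := by
      intro h0
      apply hx
      funext j
      simp only [Pi.zero_apply]
      rw [Fin.fin_one_eq_zero j]
      exact h0
    have hval : x ⬝ᵥ ((A.map (Int.cast : ℤ → ℝ)) *ᵥ x) = ((A 0 0 : ℤ) : ℝ) * (x 0 * x 0) := by
      simp [dotProduct, mulVec, Matrix.map_apply, Fin.sum_univ_one]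
      ring
    rw [hval, h2 0]
    have hp := mul_self_pos.mpr hx0
    push_cast
    nlinarith
  set m' : Fin n → Fin n → ℚ := fun k l => coeffM ψ k.castSucc l.castSucc with hm'
  have hCF' : ψ' = quadForm m' := by
    rw [hψ', eq_quadForm hψh]
    unfold quadForm
    simp only [map_sum, _root_.map_smul, _root_.map_mul, aeval_X]
    rw [Fin.sum_univ_castSucc]
    simp only [Fin.snoc_last, Fin.snoc_castSucc, zero_mul, smul_zero, Finset.sum_const_zero,
      add_zero]
    refine Finset.sum_congr rfl fun k _ => ?_
    rw [Fin.sum_univ_castSucc]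
    simp only [Fin.snoc_last, Fin.snoc_castSucc, mul_zero, smul_zero, add_zero]
    rfl
  have hm'diag : ∀ k : Fin n, m' k k = c k.castSucc := by
    intro k
    rw [hm']
    simp only
    rw [coeffM, if_pos rfl, hc]
  have hψ'h : ψ'.IsHomogeneous 2 := by
    rw [hCF']
    exact quadForm_isHomogeneous m'
  refine ⟨?_, hψ'h, ?_⟩
  · intro h0
    obtain ⟨j0⟩ : Nonempty (Fin n) := ⟨⟨0, Nat.pos_of_ne_zero hn0⟩⟩
    have hco : coeff (Finsupp.single j0 2) ψ' = m' j0 j0 := by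
      rw [hCF', coeff_quadForm_diag]
    rw [h0, coeff_zero] at hco
    exact hcall j0.castSucc (by rw [← hm'diag j0, ← hco])
  · intro i
    apply (weylRefl_fixed_iff (A.submatrix Fin.castSucc Fin.castSucc) i
      (h2 i.castSucc) hψ'h).mpr
    intro j hj
    have hij : i ≠ j := Ne.symm hj
    have hijc : i.castSucc ≠ j.castSucc := fun h => hij (Fin.castSucc_injective n h)
    rw [hCF', coeff_quadForm_offdiag m' hij, coeff_quadForm_diag]
    have e1 : m' i j = coeff (Finsupp.single i.castSucc 1 + Finsupp.single j.castSucc 1) ψ / 2 := by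
      rw [hm']
      simp only
      rw [coeffM, if_neg hijc]
    have e2 : m' j i = coeff (Finsupp.single i.castSucc 1 + Finsupp.single j.castSucc 1) ψ / 2 := by
      rw [hm']
      simp only
      rw [coeffM, if_neg (Ne.symm hijc), hbsymm j.castSucc i.castSucc]
    rw [e1, e2, hm'diag i]
    have e4 : coeff (Finsupp.single i.castSucc 1 + Finsupp.single j.castSucc 1) ψ
        = (A j.castSucc i.castSucc : ℚ) * c i.castSucc :=
      hrel i.castSucc j.castSucc (Ne.symm hijc)
    rw [e4]
    have e5 : (A.submatrix Fin.castSucc Fin.castSucc) j i = A j.castSucc i.castSucc := rfl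
    rw [e5]
    ring
end

section
/- Let A be an n×n Cartan matrix and let f ∈ I(A) be homogeneous of degree l, written f = Σ_{i=0}^l f_i·ω_n^{l−i} with each f_i ∈ ℚ[ω_1,…,ω_{n−1}] homogeneous of degree i. Then for every 0 ≤ j ≤ l: f_j = Σ_{i=0}^{j} (−1)^{l−i} · binom(l−i, l−j) · f_i · (ω'_n)^{j−i}, where ω'_n = Σ_{j=1}^{n−1} a_{jn} ω_j. -/
open MvPolynomial Matrix

namespace CartanAux
open MvPolynomial Polynomial

/-- The isomorphism-like projection separating the last variable. -/
noncomputable def proj (n : ℕ) :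
    MvPolynomial (Fin (n+1)) ℚ →ₐ[ℚ] Polynomial (MvPolynomial (Fin n) ℚ) :=
  MvPolynomial.aeval (Fin.lastCases Polynomial.X (fun j => Polynomial.C (MvPolynomial.X j)))

lemma proj_X_last (n : ℕ) : proj n (X (Fin.last n)) = Polynomial.X := by
  simp [proj]

lemma proj_rename {n : ℕ} (p : MvPolynomial (Fin n) ℚ) :
    proj n (rename Fin.castSucc p) = Polynomial.C p := by
  rw [proj, aeval_rename]
  have h1 : ((Fin.lastCases Polynomial.X (fun j => Polynomial.C (MvPolynomial.X j)) :
      Fin (n+1) → Polynomial (MvPolynomial (Fin n) ℚ)) ∘ Fin.castSucc) =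
      fun j => Polynomial.C (MvPolynomial.X j) := by
    funext j; simp
  rw [h1]
  have h2 : (MvPolynomial.aeval fun j : Fin n =>
      Polynomial.C (MvPolynomial.X j : MvPolynomial (Fin n) ℚ)) =
      IsScalarTower.toAlgHom ℚ (MvPolynomial (Fin n) ℚ)
        (Polynomial (MvPolynomial (Fin n) ℚ)) :=
    MvPolynomial.algHom_ext fun j => by simp [Polynomial.algebraMap_eq]
  rw [h2]; simp [Polynomial.algebraMap_eq]

end CartanAux

namespace CartanAux
open MvPolynomial Polynomial

lemma weylRefl_rename {n : ℕ} (A : Matrix (Fin (n+1)) (Fin (n+1)) ℤ)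
    (p : MvPolynomial (Fin n) ℚ) :
    weylRefl A (Fin.last n) (rename Fin.castSucc p) = rename Fin.castSucc p := by
  rw [weylRefl, aeval_rename]
  have h1 : ((fun j => MvPolynomial.X j - if j = Fin.last n then simpleRoot A (Fin.last n) else 0)
      ∘ Fin.castSucc : Fin n → MvPolynomial (Fin (n+1)) ℚ) =
      fun j => MvPolynomial.X (Fin.castSucc j) := by
    funext j
    simp [(Fin.castSucc_lt_last j).ne]
  rw [h1]
  have h3 : (MvPolynomial.aeval fun j : Fin n => (MvPolynomial.X (Fin.castSucc j) :
      MvPolynomial (Fin (n+1)) ℚ)) = rename Fin.castSucc :=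
    MvPolynomial.algHom_ext fun j => by rw [MvPolynomial.aeval_X, rename_X]
  rw [h3]

lemma weylRefl_X_last {n : ℕ} (A : Matrix (Fin (n+1)) (Fin (n+1)) ℤ) (hA : IsCartanMatrix A) :
    weylRefl A (Fin.last n) (MvPolynomial.X (Fin.last n)) =
      - MvPolynomial.X (Fin.last n) - rename Fin.castSucc (omegaPrime A) := by
  rw [weylRefl, MvPolynomial.aeval_X, if_pos rfl, simpleRoot, Fin.sum_univ_castSucc, hA.1]
  have h : (rename (Fin.castSucc : Fin n → Fin (n+1)) (omegaPrime A)) =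
      ∑ j : Fin n, (A j.castSucc (Fin.last n) : ℚ) • MvPolynomial.X (Fin.castSucc j) := by
    rw [omegaPrime, map_sum]
    simp
  rw [h]
  have h2 : ((2:ℤ):ℚ) • (MvPolynomial.X (Fin.last n) : MvPolynomial (Fin (n+1)) ℚ) =
      2 * MvPolynomial.X (Fin.last n) := by
    rw [MvPolynomial.smul_eq_C_mul]
    norm_num [map_ofNat]
  rw [h2]
  ring

end CartanAux


/-- for `f = ∑ f_i ω_n^{l-i} ∈ I(A)` homogeneous of degree `l`, the components
satisfy `f_j = ∑_{i=0}^{j} (−1)^{l−i} C(l−i, l−j) f_i (ω'_n)^{j−i}`. -/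
theorem components_recursion {n l : ℕ}
    (A : Matrix (Fin (n + 1)) (Fin (n + 1)) ℤ) (hA : IsCartanMatrix A)
    (f : MvPolynomial (Fin (n + 1)) ℚ) (hfh : f.IsHomogeneous l)
    (hfinv : WeylInvariant A f)
    (g : ℕ → MvPolynomial (Fin n) ℚ) (hg : ∀ i, (g i).IsHomogeneous i)
    (hdec : f = ∑ i ∈ Finset.range (l + 1),
      rename Fin.castSucc (g i) * X (Fin.last n) ^ (l - i)) :
    ∀ j ≤ l, g j = ∑ i ∈ Finset.range (j + 1),
      ((-1 : ℚ) ^ (l - i) * ((l - i).choose (l - j) : ℚ)) •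
        (g i * omegaPrime A ^ (j - i)) := by
  intro j hj
  set w : MvPolynomial (Fin n) ℚ := omegaPrime A with hw
  -- image of f under the projection
  have e1 : CartanAux.proj n f = ∑ i ∈ Finset.range (l + 1),
      Polynomial.C (g i) * Polynomial.X ^ (l - i) := by
    rw [hdec, map_sum]
    refine Finset.sum_congr rfl fun i _ => ?_
    rw [_root_.map_mul, _root_.map_pow, CartanAux.proj_rename, CartanAux.proj_X_last]
  -- image of σ f under the projection
  have e2 : CartanAux.proj n (weylRefl A (Fin.last n) f) = ∑ i ∈ Finset.range (l + 1),
      Polynomial.C (g i) * (-(Polynomial.X + Polynomial.C w)) ^ (l - i) := by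
    rw [hdec, map_sum, map_sum]
    refine Finset.sum_congr rfl fun i _ => ?_
    rw [_root_.map_mul, _root_.map_pow, CartanAux.weylRefl_rename A, CartanAux.weylRefl_X_last A hA,
      _root_.map_mul, _root_.map_pow, CartanAux.proj_rename, _root_.map_sub, _root_.map_neg,
      CartanAux.proj_X_last, CartanAux.proj_rename]
    ring_nf
    rw [hw]
  have key : (∑ i ∈ Finset.range (l + 1),
      Polynomial.C (g i) * Polynomial.X ^ (l - i)) = ∑ i ∈ Finset.range (l + 1),
      Polynomial.C (g i) * (-(Polynomial.X + Polynomial.C w)) ^ (l - i) := by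
    rw [← e1, ← e2, hfinv (Fin.last n)]
  -- coefficient of the left-hand side
  have hL : (∑ i ∈ Finset.range (l + 1),
      Polynomial.C (g i) * Polynomial.X ^ (l - i)).coeff (l - j) = g j := by
    rw [Polynomial.finset_sum_coeff]
    rw [Finset.sum_eq_single j]
    · simp
    · intro i hi hij
      rw [Polynomial.coeff_C_mul, Polynomial.coeff_X_pow, if_neg, mul_zero]
      simp only [Finset.mem_range] at hi
      omega
    · intro h
      simp only [Finset.mem_range, not_lt] at h
      omega
  -- coefficient of the right-hand side
  have hterm : ∀ i, (Polynomial.C (g i) *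
      (-(Polynomial.X + Polynomial.C w)) ^ (l - i)).coeff (l - j) =
      g i * ((-1 : MvPolynomial (Fin n) ℚ) ^ (l - i) *
        (w ^ (l - i - (l - j)) * ((l - i).choose (l - j) : MvPolynomial (Fin n) ℚ))) := by
    intro i
    have hneg : (-(Polynomial.X + Polynomial.C w)) ^ (l - i) =
        Polynomial.C ((-1 : MvPolynomial (Fin n) ℚ) ^ (l - i)) *
          (Polynomial.X + Polynomial.C w) ^ (l - i) := by
      rw [show (-(Polynomial.X + Polynomial.C w)) =
          Polynomial.C (-1 : MvPolynomial (Fin n) ℚ) * (Polynomial.X + Polynomial.C w) by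
            rw [_root_.map_neg, _root_.map_one]; ring,
        mul_pow, ← _root_.map_pow]
    rw [hneg, Polynomial.coeff_C_mul, Polynomial.coeff_C_mul,
      Polynomial.coeff_X_add_C_pow]
  have hR : (∑ i ∈ Finset.range (l + 1),
      Polynomial.C (g i) * (-(Polynomial.X + Polynomial.C w)) ^ (l - i)).coeff (l - j) =
      ∑ i ∈ Finset.range (j + 1),
        ((-1 : ℚ) ^ (l - i) * ((l - i).choose (l - j) : ℚ)) • (g i * w ^ (j - i)) := by
    rw [Polynomial.finset_sum_coeff]
    rw [← Finset.sum_subset (Finset.range_subset_range.2 (by omega : j + 1 ≤ l + 1))]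
    · refine Finset.sum_congr rfl fun i hi => ?_
      simp only [Finset.mem_range] at hi
      rw [hterm i]
      have hij : l - i - (l - j) = j - i := by omega
      rw [hij, smul_eq_C_mul, _root_.map_mul, _root_.map_pow, _root_.map_neg, _root_.map_one, map_natCast]
      ring
    · intro i hi hni
      simp only [Finset.mem_range] at hi hni
      rw [hterm i, Nat.choose_eq_zero_of_lt (by omega : l - i < l - j)]
      simp
  rw [← hL, key, hR]
end

section
/- Let A be an n×n Cartan matrix and let f ∈ I(A) be homogeneous of degree l, written f = Σ_{i=0}^l f_i·ω_n^{l−i} with each f_i ∈ ℚ[ω_1,…,ω_{n−1}] homogeneous of degree i. Then ω'_n = Σ_{j=1}^{n−1} a_{jn} ω_j divides f_{l−1} in ℚ[ω_1,…,ω_{n−1}]. -/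
open MvPolynomial Matrix

noncomputable def phiAux {n : ℕ} : MvPolynomial (Fin (n+1)) ℚ →ₐ[ℚ] Polynomial (MvPolynomial (Fin n) ℚ) :=
  aeval (fun i => Fin.lastCases Polynomial.X (fun j => Polynomial.C (X j)) i)

lemma phiAux_X_last {n : ℕ} : phiAux (n := n) (X (Fin.last n)) = Polynomial.X := by
  simp [phiAux]

lemma phiAux_rename {n : ℕ} (p : MvPolynomial (Fin n) ℚ) :
    phiAux (rename Fin.castSucc p) = Polynomial.C p := by
  rw [phiAux, aeval_rename]
  have h1 : ((fun i => Fin.lastCases Polynomial.X (fun j => Polynomial.C (X j)) i) ∘ Fin.castSucc : Fin n → Polynomial (MvPolynomial (Fin n) ℚ)) = fun j => Polynomial.C (X j) := by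
    funext j; simp [Function.comp]
  rw [h1]
  have h2 : (aeval fun j => (Polynomial.C (X j) : Polynomial (MvPolynomial (Fin n) ℚ))) =
      (Polynomial.CAlgHom (R := ℚ) (A := MvPolynomial (Fin n) ℚ)).comp (aeval X) := by
    rw [comp_aeval]; rfl
  rw [h2]
  simp [Polynomial.CAlgHom]

lemma weylRefl_rename {n : ℕ} (A : Matrix (Fin (n + 1)) (Fin (n + 1)) ℤ)
    (p : MvPolynomial (Fin n) ℚ) :
    weylRefl A (Fin.last n) (rename Fin.castSucc p) = rename Fin.castSucc p := by
  rw [weylRefl, aeval_rename]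
  have h1 : ((fun j => X j - if j = Fin.last n then simpleRoot A (Fin.last n) else 0) ∘
      Fin.castSucc : Fin n → MvPolynomial (Fin (n+1)) ℚ) = X ∘ Fin.castSucc := by
    funext j
    simp [Function.comp, (Fin.castSucc_lt_last j).ne]
  rw [h1, rename_eq_aeval]

lemma phiAux_simpleRoot {n : ℕ} (A : Matrix (Fin (n + 1)) (Fin (n + 1)) ℤ)
    (hA : IsCartanMatrix A) :
    phiAux (simpleRoot A (Fin.last n)) =
      Polynomial.C (omegaPrime A) + 2 * Polynomial.X := by
  rw [simpleRoot, map_sum, Fin.sum_univ_castSucc]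
  simp only [_root_.map_smul, phiAux_X_last, phiAux]
  rw [hA.1]
  simp only [aeval_X, Fin.lastCases_castSucc, Fin.lastCases_last]
  rw [omegaPrime, map_sum]
  congr 1
  · exact Finset.sum_congr rfl fun j _ => by rw [Polynomial.smul_C]
  · push_cast
    rw [two_smul, two_mul]

/-- for `f = ∑ f_i ω_n^{l-i} ∈ I(A)` homogeneous of degree `l`, the element
`ω'_n = ∑_{j ≤ n-1} a_{jn} ω_j` divides the component `f_{l-1}`. -/
theorem omegaPrime_dvd_component {n l : ℕ} (hl : 1 ≤ l)
    (A : Matrix (Fin (n + 1)) (Fin (n + 1)) ℤ) (hA : IsCartanMatrix A)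
    (f : MvPolynomial (Fin (n + 1)) ℚ) (hfh : f.IsHomogeneous l)
    (hfinv : WeylInvariant A f)
    (g : ℕ → MvPolynomial (Fin n) ℚ) (hg : ∀ i, (g i).IsHomogeneous i)
    (hdec : f = ∑ i ∈ Finset.range (l + 1),
      rename Fin.castSucc (g i) * X (Fin.last n) ^ (l - i)) :
    omegaPrime A ∣ g (l - 1) := by
  classical
  set ω : MvPolynomial (Fin n) ℚ := omegaPrime A with hω
  have hσX : phiAux (weylRefl A (Fin.last n) (X (Fin.last n))) =
      -(Polynomial.X + Polynomial.C ω) := by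
    have : weylRefl A (Fin.last n) (X (Fin.last n)) =
        X (Fin.last n) - simpleRoot A (Fin.last n) := by simp [weylRefl]
    rw [this, map_sub, phiAux_X_last, phiAux_simpleRoot A hA]
    ring
  have h1 : phiAux f = ∑ i ∈ Finset.range (l + 1),
      Polynomial.C (g i) * Polynomial.X ^ (l - i) := by
    rw [hdec, map_sum]
    exact Finset.sum_congr rfl fun i _ => by
      rw [_root_.map_mul, map_pow, phiAux_rename, phiAux_X_last]
  have h2 : phiAux f = ∑ i ∈ Finset.range (l + 1),
      Polynomial.C (g i) * (-(Polynomial.X + Polynomial.C ω)) ^ (l - i) := by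
    conv_lhs => rw [← hfinv (Fin.last n), hdec]
    simp only [map_sum, _root_.map_mul, map_pow]
    exact Finset.sum_congr rfl fun i _ => by
      rw [weylRefl_rename, phiAux_rename, hσX]
  have e1 : (phiAux f).coeff 1 = g (l - 1) := by
    rw [h1, Polynomial.finset_sum_coeff]
    simp only [Polynomial.coeff_C_mul, Polynomial.coeff_X_pow]
    rw [Finset.sum_eq_single (l - 1)]
    · have hll : l - (l - 1) = 1 := by omega
      rw [hll, if_pos rfl, mul_one]
    · intro i hi hne
      rw [Finset.mem_range] at hi
      rw [if_neg (by omega), mul_zero]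
    · intro h
      exact absurd (Finset.mem_range.2 (by omega)) h
  have e2 : (phiAux f).coeff 1 = ∑ i ∈ Finset.range (l + 1),
      g i * ((-1 : MvPolynomial (Fin n) ℚ) ^ (l - i) * (ω ^ (l - i - 1) * ((l - i : ℕ) : MvPolynomial (Fin n) ℚ))) := by
    rw [h2, Polynomial.finset_sum_coeff]
    have hc : ∀ k : ℕ, ((-(Polynomial.X + Polynomial.C ω)) ^ k).coeff 1 =
        (-1 : MvPolynomial (Fin n) ℚ) ^ k * (ω ^ (k - 1) * (k : MvPolynomial (Fin n) ℚ)) := by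
      intro k
      have hneg : ((-(Polynomial.X + Polynomial.C ω)) ^ k : Polynomial (MvPolynomial (Fin n) ℚ)) =
          Polynomial.C ((-1) ^ k) * (Polynomial.X + Polynomial.C ω) ^ k := by
        have ha : (-(Polynomial.X + Polynomial.C ω) : Polynomial (MvPolynomial (Fin n) ℚ)) =
            Polynomial.C (-1) * (Polynomial.X + Polynomial.C ω) := by
          rw [map_neg, Polynomial.C_1]
          exact (neg_one_mul (α := Polynomial (MvPolynomial (Fin n) ℚ)) _).symm
        rw [ha, mul_pow, ← map_pow]
      rw [hneg, Polynomial.coeff_C_mul, Polynomial.coeff_X_add_C_pow, Nat.choose_one_right]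
    refine Finset.sum_congr rfl fun i _ => ?_
    rw [Polynomial.coeff_C_mul, hc]
  have key : g (l - 1) = ∑ i ∈ Finset.range (l + 1),
      g i * ((-1 : MvPolynomial (Fin n) ℚ) ^ (l - i) * (ω ^ (l - i - 1) * ((l - i : ℕ) : MvPolynomial (Fin n) ℚ))) := by
    rw [← e2, e1]
  have hmem : l - 1 ∈ Finset.range (l + 1) := Finset.mem_range.2 (by omega)
  rw [← Finset.sum_erase_add _ _ hmem] at key
  have hll : l - (l - 1) = 1 := by omega
  rw [hll] at key
  simp only [pow_one, pow_zero, Nat.cast_one, one_mul, mul_one, mul_neg_one] at key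
  have hsum : ω ∣ ∑ i ∈ (Finset.range (l + 1)).erase (l - 1),
      g i * ((-1 : MvPolynomial (Fin n) ℚ) ^ (l - i) * (ω ^ (l - i - 1) * ((l - i : ℕ) : MvPolynomial (Fin n) ℚ))) := by
    refine Finset.dvd_sum fun i hi => ?_
    rw [Finset.mem_erase, Finset.mem_range] at hi
    by_cases hil : i = l
    · subst hil
      simp [Nat.sub_self]
    · exact (((dvd_pow_self ω (by omega : l - i - 1 ≠ 0)).mul_right _).mul_left _).mul_left _
  have hdd : ω ∣ g (l - 1) + g (l - 1) := by
    have : g (l - 1) + g (l - 1) = ∑ i ∈ (Finset.range (l + 1)).erase (l - 1),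
        g i * ((-1 : MvPolynomial (Fin n) ℚ) ^ (l - i) * (ω ^ (l - i - 1) * ((l - i : ℕ) : MvPolynomial (Fin n) ℚ))) := by
      linear_combination key
    rw [this]
    exact hsum
  have := hdd.mul_left (C ((2 : ℚ)⁻¹))
  have heq : C ((2 : ℚ)⁻¹) * (g (l - 1) + g (l - 1)) = g (l - 1) := by
    rw [← smul_eq_C_mul, ← two_smul ℚ, smul_smul]
    norm_num
  rwa [heq] at this
end

section
/- Let A be an n×n Cartan matrix of indefinite type whose upper-left (n−1)×(n−1) principal submatrix A' is indecomposable and symmetrizable, and suppose I(A') = ℚ[ψ'] for a nonzero ψ' = Σ_{i,j=1}^{n−1} λ_{ij} ω_i ω_j ∈ I²(A') with λ_{ij} = λ_{ji}. Let l = 2m be even and let f ∈ I(A) be homogeneous of degree l, written f = Σ_{i=0}^l f_i·ω_n^{l−i}. Then there exists a constant k ∈ ℚ such that f_l = k·ψ'^m and f_{l−1} = k·m·ψ'^{m−1}·ω_n^*, where ω_n^* = Σ_{j=1}^{n−1} λ_{jj} a_{nj} ω_j. -/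
open MvPolynomial Matrix

section AuxTopTwo

/-- `Φ : ℚ[ω_1,…,ω_{n+1}] ≃ ℚ[ω_1,…,ω_n][Y]`, last variable to `Y`. -/
noncomputable def PhiEquiv (n : ℕ) :
    MvPolynomial (Fin (n + 1)) ℚ ≃ₐ[ℚ] Polynomial (MvPolynomial (Fin n) ℚ) :=
  (renameEquiv ℚ finSuccEquivLast).trans (optionEquivLeft ℚ (Fin n))

lemma PhiEquiv_X_castSucc {n : ℕ} (j : Fin n) :
    PhiEquiv n (X j.castSucc) = Polynomial.C (X j) := by
  simp [PhiEquiv, optionEquivLeft_X_some]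

lemma PhiEquiv_X_last {n : ℕ} : PhiEquiv n (X (Fin.last n)) = Polynomial.X := by
  simp [PhiEquiv, optionEquivLeft_X_none]

lemma PhiEquiv_C {n : ℕ} (a : ℚ) : PhiEquiv n (C a) = Polynomial.C (C a) := by
  simp [PhiEquiv, optionEquivLeft_C]

lemma PhiEquiv_rename {n : ℕ} (g : MvPolynomial (Fin n) ℚ) :
    PhiEquiv n (rename Fin.castSucc g) = Polynomial.C g := by
  induction g using MvPolynomial.induction_on with
  | C a => simp [PhiEquiv_C]
  | add p q hp hq => simp [map_add, hp, hq]
  | mul_X p j hp => simp [_root_.map_mul, hp, PhiEquiv_X_castSucc]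

/-- The map describing `Φ ∘ σ_{i} ∘ (rename castSucc)`. -/
noncomputable def Tmap {n : ℕ} (A' : Matrix (Fin n) (Fin n) ℤ) (i : Fin n) (c : ℚ) :
    MvPolynomial (Fin n) ℚ →ₐ[ℚ] Polynomial (MvPolynomial (Fin n) ℚ) :=
  aeval fun j => Polynomial.C (X j - if j = i then simpleRoot A' i else 0)
    - if j = i then c • Polynomial.X else 0

lemma weylRefl_X {ι : Type*} [Fintype ι] [DecidableEq ι] (A : Matrix ι ι ℤ) (i j : ι) :
    weylRefl A i (X j) = X j - if j = i then simpleRoot A i else 0 := by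
  rw [weylRefl, aeval_X]

lemma weylRefl_C {ι : Type*} [Fintype ι] [DecidableEq ι] (A : Matrix ι ι ℤ) (i : ι) (a : ℚ) :
    weylRefl A i (C a) = C a := by
  rw [weylRefl, aeval_C, MvPolynomial.algebraMap_eq]

lemma Tmap_X {n : ℕ} (A' : Matrix (Fin n) (Fin n) ℤ) (i : Fin n) (c : ℚ) (j : Fin n) :
    Tmap A' i c (X j) = Polynomial.C (X j - if j = i then simpleRoot A' i else 0)
      - if j = i then c • Polynomial.X else 0 := by
  rw [Tmap, aeval_X]

lemma Tmap_C {n : ℕ} (A' : Matrix (Fin n) (Fin n) ℤ) (i : Fin n) (c : ℚ) (a : ℚ) :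
    Tmap A' i c (C a) = Polynomial.C (C a) := by
  rw [Tmap, aeval_C]
  rw [show (algebraMap ℚ (Polynomial (MvPolynomial (Fin n) ℚ))) a
      = Polynomial.C (algebraMap ℚ (MvPolynomial (Fin n) ℚ) a) from rfl,
    MvPolynomial.algebraMap_eq]

lemma Tmap_coeff_zero {n : ℕ} (A' : Matrix (Fin n) (Fin n) ℤ) (i : Fin n) (c : ℚ)
    (g : MvPolynomial (Fin n) ℚ) :
    (Tmap A' i c g).coeff 0 = weylRefl A' i g := by
  induction g using MvPolynomial.induction_on with
  | C a => rw [Tmap_C, weylRefl_C, Polynomial.coeff_C_zero]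
  | add p q hp hq => simp only [map_add, Polynomial.coeff_add, hp, hq]
  | mul_X p j hp =>
      rw [_root_.map_mul, _root_.map_mul, Polynomial.mul_coeff_zero, hp, Tmap_X, weylRefl_X]
      congr 1
      by_cases h : j = i
      · rw [if_pos h, if_pos h, Polynomial.coeff_sub, Polynomial.coeff_C_zero,
          Polynomial.coeff_smul, Polynomial.coeff_X_zero, smul_zero, sub_zero]
      · rw [if_neg h, if_neg h, sub_zero, Polynomial.coeff_C_zero]

lemma Tmap_coeff_one {n : ℕ} (A' : Matrix (Fin n) (Fin n) ℤ) (i : Fin n) (c : ℚ)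
    (g : MvPolynomial (Fin n) ℚ) :
    (Tmap A' i c g).coeff 1 = -(c • weylRefl A' i (pderiv i g)) := by
  induction g using MvPolynomial.induction_on with
  | C a =>
      rw [Tmap_C, Polynomial.coeff_C, if_neg one_ne_zero, pderiv_C, map_zero, smul_zero,
        neg_zero]
  | add p q hp hq =>
      simp only [map_add, Polynomial.coeff_add, hp, hq, smul_add]
      ring
  | mul_X p j hp =>
      rw [_root_.map_mul, Polynomial.mul_coeff_one, hp, Tmap_coeff_zero, Tmap_X,
        pderiv_mul, pderiv_X, map_add, _root_.map_mul (weylRefl A' i),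
        _root_.map_mul (weylRefl A' i), weylRefl_X]
      by_cases h : j = i
      · subst h
        rw [if_pos rfl, if_pos rfl, Pi.single_eq_same, _root_.map_one]
        have hc1 : (Polynomial.C (X j - simpleRoot A' j) - c • Polynomial.X).coeff 1
            = -(C c) := by
          rw [Polynomial.coeff_sub, Polynomial.coeff_C, if_neg one_ne_zero,
            Polynomial.coeff_smul, Polynomial.coeff_X_one, smul_eq_C_mul, mul_one, zero_sub]
        have hc0 : (Polynomial.C (X j - simpleRoot A' j) - c • Polynomial.X).coeff 0
            = X j - simpleRoot A' j := by
          rw [Polynomial.coeff_sub, Polynomial.coeff_C_zero, Polynomial.coeff_smul,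
            Polynomial.coeff_X_zero, smul_zero, sub_zero]
        rw [hc1, hc0]
        simp only [smul_eq_C_mul]
        ring
      · rw [if_neg h, if_neg h, Pi.single_eq_of_ne h, map_zero, mul_zero, add_zero,
          sub_zero, sub_zero, Polynomial.coeff_C, if_neg one_ne_zero, Polynomial.coeff_C_zero]
        simp only [smul_eq_C_mul]
        ring

lemma weylRefl_X_last {n : ℕ} (A : Matrix (Fin (n + 1)) (Fin (n + 1)) ℤ) (i : Fin n) :
    weylRefl A i.castSucc (X (Fin.last n)) = X (Fin.last n) := by
  rw [weylRefl_X, if_neg (Fin.castSucc_lt_last i).ne', sub_zero]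

lemma PhiEquiv_simpleRoot {n : ℕ} (A : Matrix (Fin (n + 1)) (Fin (n + 1)) ℤ) (i : Fin n) :
    PhiEquiv n (simpleRoot A i.castSucc)
      = Polynomial.C (simpleRoot (A.submatrix Fin.castSucc Fin.castSucc) i)
        + (A (Fin.last n) i.castSucc : ℚ) • Polynomial.X := by
  rw [simpleRoot, Fin.sum_univ_castSucc, map_add, _root_.map_smul, PhiEquiv_X_last]
  congr 1
  rw [map_sum, simpleRoot, map_sum]
  refine Finset.sum_congr rfl fun j _ => ?_
  rw [_root_.map_smul, PhiEquiv_X_castSucc, Polynomial.smul_C, Matrix.submatrix_apply]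

lemma Phi_weyl_rename {n : ℕ} (A : Matrix (Fin (n + 1)) (Fin (n + 1)) ℤ) (i : Fin n)
    (g : MvPolynomial (Fin n) ℚ) :
    PhiEquiv n (weylRefl A i.castSucc (rename Fin.castSucc g))
      = Tmap (A.submatrix Fin.castSucc Fin.castSucc) i (A (Fin.last n) i.castSucc : ℚ) g := by
  induction g using MvPolynomial.induction_on with
  | C a => rw [rename_C, weylRefl_C, PhiEquiv_C, Tmap_C]
  | add p q hp hq => simp only [map_add, hp, hq]
  | mul_X p j hp =>
      rw [_root_.map_mul, _root_.map_mul, _root_.map_mul, hp, _root_.map_mul,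
        rename_X, weylRefl_X, Tmap_X]
      congr 1
      by_cases h : j = i
      · rw [if_pos (by rw [h]), if_pos h, if_pos h, map_sub, PhiEquiv_X_castSucc,
          PhiEquiv_simpleRoot, map_sub]
        ring
      · rw [if_neg (fun hh => h (Fin.castSucc_inj.mp hh)), if_neg h, if_neg h,
          sub_zero, sub_zero, sub_zero, PhiEquiv_X_castSucc]

lemma coeff_zero_sum_mul {S : Type*} [CommRing S] (M : ℕ) (p : ℕ → Polynomial S) :
    (∑ j ∈ Finset.range (M + 1), p j * Polynomial.X ^ (M - j)).coeff 0 = (p M).coeff 0 := by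
  rw [Polynomial.finset_sum_coeff, Finset.sum_eq_single M]
  · rw [Nat.sub_self, pow_zero, mul_one]
  · intro j hj hne
    have hj' := Finset.mem_range.mp hj
    rw [Polynomial.coeff_mul_X_pow', if_neg (by omega)]
  · intro h; exact absurd (Finset.self_mem_range_succ M) h

lemma coeff_one_sum_mul {S : Type*} [CommRing S] (M : ℕ) (hM : 1 ≤ M) (p : ℕ → Polynomial S) :
    (∑ j ∈ Finset.range (M + 1), p j * Polynomial.X ^ (M - j)).coeff 1
      = (p M).coeff 1 + (p (M - 1)).coeff 0 := by
  rw [Polynomial.finset_sum_coeff]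
  have hsub : ({M - 1, M} : Finset ℕ) ⊆ Finset.range (M + 1) := by
    intro x hx
    simp only [Finset.mem_insert, Finset.mem_singleton] at hx
    rw [Finset.mem_range]; omega
  rw [← Finset.sum_subset hsub (by
    intro x hx hnx
    simp only [Finset.mem_insert, Finset.mem_singleton, not_or] at hnx
    have hx' := Finset.mem_range.mp hx
    rw [Polynomial.coeff_mul_X_pow', if_neg (by omega)])]
  rw [Finset.sum_pair (by omega : M - 1 ≠ M), Polynomial.coeff_mul_X_pow',
    Polynomial.coeff_mul_X_pow', if_pos (by omega), if_pos (by omega),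
    (by omega : M - (M - 1) = 1), Nat.sub_self, Nat.sub_self, Nat.sub_zero, add_comm]

lemma homog_aeval_even {n : ℕ} {ψ h : MvPolynomial (Fin n) ℚ} (hψ : ψ.IsHomogeneous 2)
    {m : ℕ} (hh : h.IsHomogeneous (2 * m)) {p : Polynomial ℚ}
    (hp : h = Polynomial.aeval ψ p) :
    h = p.coeff m • ψ ^ m := by
  set N := max (p.natDegree + 1) (m + 1) with hN
  have hdeg : p.natDegree < N := lt_of_lt_of_le (Nat.lt_succ_self _) (le_max_left _ _)
  have hexp : h = ∑ i ∈ Finset.range N, p.coeff i • ψ ^ i := by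
    rw [hp, Polynomial.aeval_eq_sum_range' hdeg]
  have h2 := congrArg (homogeneousComponent (2 * m)) hexp
  rw [homogeneousComponent_of_mem ((mem_homogeneousSubmodule _ _).mpr hh), if_pos rfl,
    map_sum] at h2
  have hterm : ∀ i ∈ Finset.range N, homogeneousComponent (2 * m) (p.coeff i • ψ ^ i)
      = if 2 * m = 2 * i then p.coeff i • ψ ^ i else 0 := by
    intro i _
    rw [_root_.map_smul, homogeneousComponent_of_mem ((mem_homogeneousSubmodule _ _).mpr
      (hψ.pow i)), smul_ite, smul_zero]
  rw [h2, Finset.sum_congr rfl hterm, Finset.sum_eq_single m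
      (fun b _ hne => by rw [if_neg (by omega)])
      (fun hmem => absurd (Finset.mem_range.mpr (lt_of_lt_of_le (Nat.lt_succ_self _)
        (le_max_right _ _))) hmem), if_pos rfl]

lemma homog_aeval_odd {n : ℕ} {ψ h : MvPolynomial (Fin n) ℚ} (hψ : ψ.IsHomogeneous 2)
    {d : ℕ} (hd : ∀ i, d ≠ 2 * i) (hh : h.IsHomogeneous d) {p : Polynomial ℚ}
    (hp : h = Polynomial.aeval ψ p) :
    h = 0 := by
  have hdeg : p.natDegree < p.natDegree + 1 := Nat.lt_succ_self _
  have hexp : h = ∑ i ∈ Finset.range (p.natDegree + 1), p.coeff i • ψ ^ i := by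
    rw [hp, Polynomial.aeval_eq_sum_range' hdeg]
  have h2 := congrArg (homogeneousComponent d) hexp
  rw [homogeneousComponent_of_mem ((mem_homogeneousSubmodule _ _).mpr hh), if_pos rfl,
    map_sum] at h2
  rw [h2, Finset.sum_eq_zero]
  intro i _
  rw [_root_.map_smul, homogeneousComponent_of_mem ((mem_homogeneousSubmodule _ _).mpr
    (hψ.pow i)), if_neg (hd i), smul_zero]


end AuxTopTwo

section AuxAlg

lemma sum_ite_const {n : ℕ} (c : Prop) [Decidable c] (v : Fin n → MvPolynomial (Fin n) ℚ) :
    (∑ b : Fin n, if c then v b else 0) = if c then ∑ b, v b else 0 := by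
  split <;> simp

lemma weylRefl_linear {n : ℕ} (A' : Matrix (Fin n) (Fin n) ℤ) (i : Fin n) (c : Fin n → ℚ) :
    weylRefl A' i (∑ j, c j • X j)
      = (∑ j, c j • X j) - c i • simpleRoot A' i := by
  rw [map_sum]
  rw [Finset.sum_congr rfl fun j _ => by
    rw [_root_.map_smul, weylRefl_X, smul_sub, smul_ite, smul_zero]]
  rw [Finset.sum_sub_distrib, Finset.sum_ite_eq' Finset.univ i (fun j => c j • simpleRoot A' i),
    if_pos (Finset.mem_univ i)]

lemma simpleRoot_eq_sum {n : ℕ} (A' : Matrix (Fin n) (Fin n) ℤ) (i : Fin n) :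
    simpleRoot A' i = ∑ j, ((A' j i : ℚ)) • X j := rfl

lemma simpleRoot_ne_zero {n : ℕ} (A' : Matrix (Fin n) (Fin n) ℤ) (i : Fin n)
    (h2 : A' i i = 2) : simpleRoot A' i ≠ 0 := by
  intro h
  have h' := congrArg (eval (Pi.single i (1 : ℚ))) h
  rw [simpleRoot, map_sum, map_zero] at h'
  rw [Finset.sum_congr rfl (fun j _ => by
    rw [smul_eval, eval_X, Pi.single_apply, mul_ite, mul_one, mul_zero])] at h'
  rw [Finset.sum_ite_eq' Finset.univ i (fun j => (A' j i : ℚ)), if_pos (Finset.mem_univ i),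
    h2] at h'
  norm_num at h'

lemma weylRefl_simpleRoot_self {n : ℕ} (A' : Matrix (Fin n) (Fin n) ℤ) (i : Fin n)
    (h2 : A' i i = 2) :
    weylRefl A' i (simpleRoot A' i) = -simpleRoot A' i := by
  rw [simpleRoot_eq_sum, weylRefl_linear, h2, ← simpleRoot_eq_sum]
  push_cast
  rw [two_smul]
  abel

lemma pderiv_psi {n : ℕ} (i : Fin n) (lam : Fin n → Fin n → ℚ)
    (hlam : ∀ a b, lam a b = lam b a) :
    pderiv i (∑ a, ∑ b, lam a b • (X a * X b : MvPolynomial (Fin n) ℚ))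
      = (2 : ℚ) • ∑ b, lam i b • X b := by
  simp only [map_sum, Derivation.map_smul, pderiv_mul, pderiv_X, Pi.single_apply,
    smul_add, ite_mul, one_mul, zero_mul, mul_ite, mul_one, mul_zero, smul_ite, smul_zero,
    Finset.sum_add_distrib, sum_ite_const, Finset.sum_ite_eq', Finset.mem_univ, if_true]
  have e : ∑ a, lam a i • (X a : MvPolynomial (Fin n) ℚ) = ∑ b, lam i b • X b :=
    Finset.sum_congr rfl fun a _ => by rw [hlam a i]
  rw [e, two_smul]

lemma psi_invariance_identity {n : ℕ} (A' : Matrix (Fin n) (Fin n) ℤ) (i : Fin n)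
    (h2 : A' i i = 2) (lam : Fin n → Fin n → ℚ) (hlam : ∀ a b, lam a b = lam b a)
    (hinv : weylRefl A' i (∑ a, ∑ b, lam a b • (X a * X b : MvPolynomial (Fin n) ℚ))
      = ∑ a, ∑ b, lam a b • (X a * X b)) :
    (2 : ℚ) • (∑ b, lam i b • X b : MvPolynomial (Fin n) ℚ)
      = lam i i • simpleRoot A' i := by
  set α := simpleRoot A' i with hα
  have expand : ∀ a b : Fin n, weylRefl A' i (lam a b • (X a * X b)) =
      lam a b • (X a * X b)
        - (if a = i then lam a b • (α * X b) else 0)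
        - (if b = i then lam a b • (X a * α) else 0)
        + (if a = i then (if b = i then lam a b • (α * α) else 0) else 0) := by
    intro a b
    rw [_root_.map_smul, _root_.map_mul, weylRefl_X, weylRefl_X, ← hα]
    by_cases ha : a = i <;> by_cases hb : b = i <;>
      simp only [ha, hb, if_true, if_false, ite_true, ite_false, smul_eq_C_mul] <;> ring
  simp only [map_sum, expand, Finset.sum_add_distrib, Finset.sum_sub_distrib,
    sum_ite_const, Finset.sum_ite_eq', Finset.mem_univ, if_true, eq_self_iff_true] at hinv
  have e1 : (∑ b, lam i b • (α * X b)) = α * ∑ b, lam i b • X b := by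
    rw [Finset.mul_sum]; exact Finset.sum_congr rfl fun b _ => (mul_smul_comm _ _ _).symm
  have e2 : (∑ a, lam a i • (X a * α)) = α * ∑ b, lam i b • X b := by
    rw [Finset.mul_sum]
    exact Finset.sum_congr rfl fun a _ => by rw [hlam a i, mul_comm (X a) α, mul_smul_comm]
  rw [e1, e2] at hinv
  have hc : α * ((2:ℚ) • ∑ b, lam i b • X b) = α * (lam i i • α) := by
    rw [two_smul]
    simp only [smul_eq_C_mul] at hinv ⊢
    linear_combination -hinv
  exact mul_left_cancel₀ (simpleRoot_ne_zero A' i h2) hc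

end AuxAlg

/-- with `A` indefinite, `A'` indecomposable symmetrizable, `I(A') = ℚ[ψ']` for
`ψ' = ∑ λ_{ij} ω_i ω_j`, and `f = ∑ f_i ω_n^{l-i} ∈ I(A)` homogeneous of even degree `l = 2m`,
there is `k ∈ ℚ` with `f_l = k ψ'^m` and `f_{l-1} = k m ψ'^{m-1} ω_n^*`, where
`ω_n^* = ∑_{j ≤ n-1} λ_{jj} a_{nj} ω_j`. -/
theorem top_two_components {n m : ℕ} (hm : 1 ≤ m)
    (A : Matrix (Fin (n + 1)) (Fin (n + 1)) ℤ) (hA : IsCartanMatrix A)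
    (hidf : IndefiniteType A)
    (hind' : Indecomposable (A.submatrix Fin.castSucc Fin.castSucc))
    (hsym' : Symmetrizable (A.submatrix Fin.castSucc Fin.castSucc))
    (lam : Fin n → Fin n → ℚ) (hlam : ∀ i j, lam i j = lam j i)
    (ψ' : MvPolynomial (Fin n) ℚ)
    (hψ'def : ψ' = ∑ i, ∑ j, lam i j • (X i * X j)) (hψ'0 : ψ' ≠ 0)
    (hψ'inv : WeylInvariant (A.submatrix Fin.castSucc Fin.castSucc) ψ')
    (hIA' : ∀ h : MvPolynomial (Fin n) ℚ,
      WeylInvariant (A.submatrix Fin.castSucc Fin.castSucc) h →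
        ∃ p : Polynomial ℚ, h = Polynomial.aeval ψ' p)
    (f : MvPolynomial (Fin (n + 1)) ℚ) (hfh : f.IsHomogeneous (2 * m))
    (hfinv : WeylInvariant A f)
    (g : ℕ → MvPolynomial (Fin n) ℚ) (hg : ∀ i, (g i).IsHomogeneous i)
    (hdec : f = ∑ i ∈ Finset.range (2 * m + 1),
      rename Fin.castSucc (g i) * X (Fin.last n) ^ (2 * m - i)) :
    ∃ k : ℚ, g (2 * m) = k • ψ' ^ m ∧
      g (2 * m - 1) = (k * m) •
        (ψ' ^ (m - 1) *
          ∑ j : Fin n, (lam j j * (A (Fin.last n) j.castSucc : ℚ)) • X j) := by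
  classical
  have hA'ii : ∀ i : Fin n, (A.submatrix Fin.castSucc Fin.castSucc) i i = 2 :=
    fun i => hA.1 _
  have hM1 : 1 ≤ 2 * m := by omega
  -- ψ' is homogeneous of degree 2
  have hψ2 : ψ'.IsHomogeneous 2 := by
    rw [hψ'def]
    have hmem : (∑ a, ∑ b, lam a b • (X a * X b : MvPolynomial (Fin n) ℚ))
        ∈ homogeneousSubmodule (Fin n) ℚ 2 :=
      Submodule.sum_mem _ fun a _ => Submodule.sum_mem _ fun b _ => Submodule.smul_mem _ _
        ((mem_homogeneousSubmodule _ _).mpr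
          ((isHomogeneous_X ℚ a).mul (isHomogeneous_X ℚ b)))
    exact (mem_homogeneousSubmodule _ _).mp hmem
  -- the two invariance equations coming from comparing coefficients of ω_n
  have hPhif : PhiEquiv n f
      = ∑ j ∈ Finset.range (2 * m + 1), Polynomial.C (g j) * Polynomial.X ^ (2 * m - j) := by
    rw [hdec, map_sum]
    exact Finset.sum_congr rfl fun j _ => by
      rw [_root_.map_mul, map_pow, PhiEquiv_rename, PhiEquiv_X_last]
  have key : ∀ i : Fin n,
      weylRefl (A.submatrix Fin.castSucc Fin.castSucc) i (g (2 * m)) = g (2 * m) ∧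
      weylRefl (A.submatrix Fin.castSucc Fin.castSucc) i (g (2 * m - 1))
        - (A (Fin.last n) i.castSucc : ℚ) •
            weylRefl (A.submatrix Fin.castSucc Fin.castSucc) i (pderiv i (g (2 * m)))
        = g (2 * m - 1) := by
    intro i
    have hPhiσ : PhiEquiv n (weylRefl A i.castSucc f)
        = ∑ j ∈ Finset.range (2 * m + 1),
            Tmap (A.submatrix Fin.castSucc Fin.castSucc) i (A (Fin.last n) i.castSucc : ℚ)
              (g j) * Polynomial.X ^ (2 * m - j) := by
      rw [hdec, map_sum, map_sum]
      exact Finset.sum_congr rfl fun j _ => by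
        rw [_root_.map_mul, _root_.map_mul, map_pow, map_pow, weylRefl_X_last,
          Phi_weyl_rename, PhiEquiv_X_last]
    have heq : (∑ j ∈ Finset.range (2 * m + 1),
          Tmap (A.submatrix Fin.castSucc Fin.castSucc) i (A (Fin.last n) i.castSucc : ℚ)
            (g j) * Polynomial.X ^ (2 * m - j))
        = ∑ j ∈ Finset.range (2 * m + 1), Polynomial.C (g j) * Polynomial.X ^ (2 * m - j) := by
      rw [← hPhiσ, hfinv i.castSucc, hPhif]
    constructor
    · have h0 := congrArg (fun q => Polynomial.coeff q 0) heq
      rwa [coeff_zero_sum_mul, coeff_zero_sum_mul, Tmap_coeff_zero,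
        Polynomial.coeff_C_zero] at h0
    · have h1 := congrArg (fun q => Polynomial.coeff q 1) heq
      rw [coeff_one_sum_mul _ hM1, coeff_one_sum_mul _ hM1, Tmap_coeff_one, Tmap_coeff_zero,
        Polynomial.coeff_C, if_neg one_ne_zero, Polynomial.coeff_C_zero, zero_add] at h1
      rw [sub_eq_neg_add]
      exact h1
  -- top component
  obtain ⟨p, hp⟩ := hIA' (g (2 * m)) (fun i => (key i).1)
  have hg2m : g (2 * m) = p.coeff m • ψ' ^ m := homog_aeval_even hψ2 (hg (2 * m)) hp
  refine ⟨p.coeff m, hg2m, ?_⟩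
  set k := p.coeff m with hk
  set ω : MvPolynomial (Fin n) ℚ :=
    ∑ j, (lam j j * (A (Fin.last n) j.castSucc : ℚ)) • X j with hω
  set hdiff := g (2 * m - 1) - (k * (m : ℚ)) • (ψ' ^ (m - 1) * ω) with hhdiff
  have hinvh : WeylInvariant (A.submatrix Fin.castSucc Fin.castSucc) hdiff := by
    intro i
    have hinvψ := hψ'inv i
    rw [hψ'def] at hinvψ
    have hid : (2 : ℚ) • (∑ b, lam i b • X b : MvPolynomial (Fin n) ℚ)
        = lam i i • simpleRoot (A.submatrix Fin.castSucc Fin.castSucc) i :=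
      psi_invariance_identity _ i (hA'ii i) lam hlam hinvψ
    have hpd : pderiv i ψ'
        = lam i i • simpleRoot (A.submatrix Fin.castSucc Fin.castSucc) i := by
      rw [hψ'def, pderiv_psi i lam hlam]
      exact hid
    have hσψ : weylRefl (A.submatrix Fin.castSucc Fin.castSucc) i ψ' = ψ' := hψ'inv i
    have hσα : weylRefl (A.submatrix Fin.castSucc Fin.castSucc) i
        (simpleRoot (A.submatrix Fin.castSucc Fin.castSucc) i)
        = -simpleRoot (A.submatrix Fin.castSucc Fin.castSucc) i :=
      weylRefl_simpleRoot_self _ i (hA'ii i)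
    have hσω : weylRefl (A.submatrix Fin.castSucc Fin.castSucc) i ω
        = ω - (lam i i * (A (Fin.last n) i.castSucc : ℚ)) •
            simpleRoot (A.submatrix Fin.castSucc Fin.castSucc) i := by
      rw [hω]
      exact weylRefl_linear _ i _
    have hpdg : pderiv i (g (2 * m))
        = (k * lam i i * (m : ℚ)) •
            (ψ' ^ (m - 1) * simpleRoot (A.submatrix Fin.castSucc Fin.castSucc) i) := by
      rw [hg2m, Derivation.map_smul, Derivation.leibniz_pow, hpd,
        ← Nat.cast_smul_eq_nsmul ℚ]
      simp only [smul_eq_mul, smul_eq_C_mul, MvPolynomial.C_mul]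
      ring
    have hσpd : weylRefl (A.submatrix Fin.castSucc Fin.castSucc) i (pderiv i (g (2 * m)))
        = (k * lam i i * (m : ℚ)) •
            (ψ' ^ (m - 1) * -simpleRoot (A.submatrix Fin.castSucc Fin.castSucc) i) := by
      rw [hpdg, _root_.map_smul, _root_.map_mul, map_pow, hσψ, hσα]
    have hσg : weylRefl (A.submatrix Fin.castSucc Fin.castSucc) i (g (2 * m - 1))
        = g (2 * m - 1) + (A (Fin.last n) i.castSucc : ℚ) •
            ((k * lam i i * (m : ℚ)) •
              (ψ' ^ (m - 1) * -simpleRoot (A.submatrix Fin.castSucc Fin.castSucc) i)) := by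
      have h2 := (key i).2
      rw [hσpd] at h2
      exact sub_eq_iff_eq_add.mp h2
    rw [hhdiff, map_sub, hσg, _root_.map_smul, _root_.map_mul, map_pow, hσψ, hσω]
    simp only [smul_eq_C_mul, MvPolynomial.C_mul]
    ring
  obtain ⟨q, hq⟩ := hIA' hdiff hinvh
  have hωhom : ω.IsHomogeneous 1 := by
    rw [hω]
    have hmem : (∑ j, (lam j j * (A (Fin.last n) j.castSucc : ℚ)) • X j)
        ∈ homogeneousSubmodule (Fin n) ℚ 1 :=
      Submodule.sum_mem _ fun j _ => Submodule.smul_mem _ _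
        ((mem_homogeneousSubmodule _ _).mpr (isHomogeneous_X ℚ j))
    exact (mem_homogeneousSubmodule _ _).mp hmem
  have hβω : (ψ' ^ (m - 1) * ω).IsHomogeneous (2 * m - 1) := by
    have h' := (hψ2.pow (m - 1)).mul hωhom
    have he : 2 * (m - 1) + 1 = 2 * m - 1 := by omega
    rwa [he] at h'
  have hhhom : hdiff.IsHomogeneous (2 * m - 1) := by
    rw [hhdiff, smul_eq_C_mul]
    exact (hg (2 * m - 1)).sub (hβω.C_mul _)
  have hzero : hdiff = 0 :=
    homog_aeval_odd hψ2 (fun i => by omega) hhhom hq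
  rw [hhdiff] at hzero
  rw [sub_eq_zero] at hzero
  exact hzero
end

section
/- Let A be an n×n indecomposable Cartan matrix of indefinite type with upper-left (n−1)×(n−1) principal submatrix A'. If I(A') = ℚ (every W(A')-invariant polynomial in ℚ[ω_1,…,ω_{n−1}] is constant), then I(A) = ℚ (every W(A)-invariant polynomial in ℚ[ω_1,…,ω_n] is constant). -/
open MvPolynomial Matrix

namespace Aux16

/-- substitution `ω_last ↦ 0`. -/
noncomputable def pihom (n : ℕ) : MvPolynomial (Fin (n+1)) ℚ →ₐ[ℚ] MvPolynomial (Fin n) ℚ :=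
  aeval (Fin.lastCases 0 X)

@[simp] lemma pihom_X_last (n : ℕ) : pihom n (X (Fin.last n)) = 0 := by
  simp [pihom]

@[simp] lemma pihom_X_castSucc {n : ℕ} (j : Fin n) : pihom n (X j.castSucc) = X j := by
  simp [pihom]

lemma weylRefl_X {ι : Type*} [Fintype ι] [DecidableEq ι] (A : Matrix ι ι ℤ) (i j : ι) :
    weylRefl A i (X j) = X j - if j = i then simpleRoot A i else 0 := by
  simp [weylRefl]

variable {n : ℕ} (A : Matrix (Fin (n+1)) (Fin (n+1)) ℤ)

lemma pihom_simpleRoot (i : Fin n) :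
    pihom n (simpleRoot A i.castSucc)
      = simpleRoot (A.submatrix Fin.castSucc Fin.castSucc) i := by
  rw [simpleRoot, map_sum, Fin.sum_univ_castSucc]
  simp [simpleRoot, submatrix_apply]

lemma pihom_weylRefl (i : Fin n) (q : MvPolynomial (Fin (n+1)) ℚ) :
    pihom n (weylRefl A i.castSucc q)
      = weylRefl (A.submatrix Fin.castSucc Fin.castSucc) i (pihom n q) := by
  have : (pihom n).comp (weylRefl A i.castSucc)
      = (weylRefl (A.submatrix Fin.castSucc Fin.castSucc) i).comp (pihom n) := by
    apply MvPolynomial.algHom_ext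
    intro j
    induction j using Fin.lastCases with
    | last =>
      simp [weylRefl_X, (Fin.castSucc_lt_last i).ne']
    | cast j =>
      simp only [AlgHom.comp_apply, weylRefl_X, map_sub, pihom_X_castSucc,
        apply_ite (pihom n), map_zero, pihom_simpleRoot, Fin.castSucc_inj]
  exact congrFun (congrArg DFunLike.coe this) q

/-- every polynomial splits as (image of its `ω_last ↦ 0` part) + `ω_last * g`. -/
lemma exists_rep (q : MvPolynomial (Fin (n+1)) ℚ) :
    ∃ g, q = rename Fin.castSucc (pihom n q) + X (Fin.last n) * g := by
  induction q using MvPolynomial.induction_on with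
  | C a => exact ⟨0, by simp [pihom]⟩
  | add p q hp hq =>
    obtain ⟨g, hg⟩ := hp; obtain ⟨g', hg'⟩ := hq
    refine ⟨g + g', ?_⟩
    rw [map_add, map_add]
    conv_lhs => rw [hg, hg']
    ring
  | mul_X p j hp =>
    obtain ⟨g, hg⟩ := hp
    induction j using Fin.lastCases with
    | last => exact ⟨p, by simp [mul_comm]⟩
    | cast j =>
      refine ⟨g * X j.castSucc, ?_⟩
      rw [_root_.map_mul, _root_.map_mul, pihom_X_castSucc, rename_X]
      calc p * X j.castSucc
          = (rename Fin.castSucc (pihom n p) + X (Fin.last n) * g) * X j.castSucc := by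
            rw [← hg]
        _ = _ := by ring

lemma X_dvd_of_pihom_eq_zero {q : MvPolynomial (Fin (n+1)) ℚ} (hq : pihom n q = 0) :
    ∃ g, q = X (Fin.last n) * g := by
  obtain ⟨g, hg⟩ := exists_rep q
  exact ⟨g, by rwa [hq, map_zero, zero_add] at hg⟩

lemma totalDegree_X_mul {σ : Type*} (s : σ) {g : MvPolynomial σ ℚ} (hg : g ≠ 0) :
    (X s * g).totalDegree = g.totalDegree + 1 := by
  classical
  have h1 : g.totalDegree + 1 = g.support.sup fun m => (m.sum fun _ e => e) + 1 :=
    Finset.comp_sup_eq_sup_comp_of_nonempty @Nat.succ_le_succ (support_nonempty.mpr hg)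
  rw [totalDegree, support_X_mul, Finset.sup_map, h1]
  apply Finset.sup_congr rfl
  intro m _
  simp only [Function.comp, addLeftEmbedding_apply]
  rw [Finsupp.sum_add_index' (fun _ => rfl) (fun _ _ _ => rfl)]
  simp [add_comm]

lemma struct
    (hIA' : ∀ h : MvPolynomial (Fin n) ℚ,
      WeylInvariant (A.submatrix Fin.castSucc Fin.castSucc) h → ∃ c : ℚ, h = C c) :
    ∀ (d : ℕ) (f : MvPolynomial (Fin (n+1)) ℚ), f.totalDegree ≤ d →
    (∀ i : Fin n, weylRefl A i.castSucc f = f) →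
    ∃ p : Polynomial ℚ, f = Polynomial.aeval (X (Fin.last n)) p := by
  intro d
  induction d using Nat.strong_induction_on with
  | _ d ih =>
    intro f hdeg hinv
    have hg : WeylInvariant (A.submatrix Fin.castSucc Fin.castSucc) (pihom n f) := by
      intro i; rw [← pihom_weylRefl, hinv i]
    obtain ⟨c, hc⟩ := hIA' _ hg
    have hπ : pihom n (f - C c) = 0 := by
      rw [map_sub, hc]
      have : pihom n (C c) = C c := by simp [pihom]
      rw [this, sub_self]
    obtain ⟨g, hgf⟩ := X_dvd_of_pihom_eq_zero hπ
    by_cases hg0 : g = 0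
    · refine ⟨Polynomial.C c, ?_⟩
      rw [Polynomial.aeval_C, MvPolynomial.algebraMap_eq]
      exact sub_eq_zero.mp (by rw [hgf, hg0, mul_zero])
    · have htd : g.totalDegree + 1 ≤ d := by
        rw [← totalDegree_X_mul (Fin.last n) hg0, ← hgf]
        refine le_trans (totalDegree_sub _ _) ?_
        simp only [totalDegree_C, max_eq_left (Nat.zero_le _)]
        exact hdeg
      have hginv : ∀ i : Fin n, weylRefl A i.castSucc g = g := by
        intro i
        have h1 : weylRefl A i.castSucc (f - C c) = f - C c := by
          rw [map_sub, hinv i]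
          congr 1
          rw [← MvPolynomial.algebraMap_eq]
          exact AlgHom.commutes _ c
        rw [hgf, _root_.map_mul, weylRefl_X,
          if_neg (Fin.castSucc_lt_last i).ne', sub_zero] at h1
        exact mul_left_cancel₀ (MvPolynomial.X_ne_zero _) h1
      obtain ⟨p, hp⟩ := ih g.totalDegree (lt_of_lt_of_le (Nat.lt_succ_self _) htd)
        g le_rfl hginv
      refine ⟨Polynomial.C c + Polynomial.X * p, ?_⟩
      rw [map_add, _root_.map_mul, Polynomial.aeval_X, Polynomial.aeval_C,
        MvPolynomial.algebraMap_eq, ← hp]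
      exact sub_eq_iff_eq_add'.mp hgf
end Aux16


/-- if `A` is indecomposable of indefinite type and the invariants of the
upper-left principal submatrix `A'` are trivial, then the invariants of `A` are trivial. -/
theorem trivial_invariants_of_trivial_submatrix_invariants {n : ℕ}
    (A : Matrix (Fin (n + 1)) (Fin (n + 1)) ℤ) (hA : IsCartanMatrix A)
    (hind : Indecomposable A) (hidf : IndefiniteType A)
    (hIA' : ∀ h : MvPolynomial (Fin n) ℚ,
      WeylInvariant (A.submatrix Fin.castSucc Fin.castSucc) h → ∃ c : ℚ, h = C c) :
    ∀ f : MvPolynomial (Fin (n + 1)) ℚ, WeylInvariant A f → ∃ c : ℚ, f = C c := by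
  intro f hf
  have hj : ∃ j : Fin n, A j.castSucc (Fin.last n) ≠ 0 := by
    by_contra hcon
    push_neg at hcon
    rcases Nat.eq_zero_or_pos n with h0 | hpos
    · subst h0
      refine hidf.1 ?_
      intro x hx
      have hx0 : x 0 ≠ 0 := by
        intro h0
        exact hx (funext fun i => by rw [show i = 0 from Fin.ext (by omega)]; simpa using h0)
      have hxA : x ⬝ᵥ ((A.map (Int.cast : ℤ → ℝ)) *ᵥ x) = x 0 * ((A 0 0 : ℝ) * x 0) := by
        simp [dotProduct, mulVec, Fin.sum_univ_one]
      rw [hxA, hA.1 0]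
      push_cast
      nlinarith [mul_self_pos.mpr hx0]
    · refine hind ⟨{Fin.last n}, {i | i ≠ Fin.last n}, ⟨_, rfl⟩,
        ⟨(⟨0, hpos⟩ : Fin n).castSucc, (Fin.castSucc_lt_last _).ne⟩, ?_, ?_, ?_⟩
      · simp [Set.disjoint_left]
      · ext i; simp [eq_or_ne]
      · intro i hi j hjm
        rw [Set.mem_singleton_iff] at hi
        subst hi
        obtain ⟨j', rfl⟩ := Fin.exists_castSucc_eq.2 hjm
        exact hA.2.2 _ _ (hcon j')
  obtain ⟨j₀, ha⟩ := hj
  obtain ⟨p, hp⟩ := Aux16.struct A hIA' f.totalDegree f le_rfl (fun i => hf i.castSucc)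
  set Φ : MvPolynomial (Fin (n+1)) ℚ →ₐ[ℚ] Polynomial ℚ :=
    aeval (fun j => if j = j₀.castSucc then Polynomial.X else 0) with hΦ
  have hΦX : ∀ j, Φ (X j) = if j = j₀.castSucc then Polynomial.X else 0 := by
    intro j; rw [hΦ, aeval_X]
  have hΦlast : Φ (X (Fin.last n)) = 0 := by
    rw [hΦX, if_neg (Fin.castSucc_lt_last j₀).ne']
  have h1 : Φ f = Polynomial.C (p.coeff 0) := by
    rw [hp, ← Polynomial.aeval_algHom_apply, hΦlast, Polynomial.aeval_def,
      Polynomial.eval₂_at_zero, Polynomial.algebraMap_eq]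
  have hroot : Φ (simpleRoot A (Fin.last n))
      = Polynomial.C ((A j₀.castSucc (Fin.last n) : ℚ)) * Polynomial.X := by
    rw [simpleRoot, map_sum, Finset.sum_eq_single j₀.castSucc]
    · rw [_root_.map_smul, hΦX, if_pos rfl, Polynomial.smul_eq_C_mul]
    · intro b _ hb
      rw [_root_.map_smul, hΦX, if_neg hb, smul_zero]
    · intro hmem; exact absurd (Finset.mem_univ _) hmem
  have h2 : Φ (weylRefl A (Fin.last n) f)
      = Polynomial.aeval
          (Polynomial.C (-(A j₀.castSucc (Fin.last n) : ℚ)) * Polynomial.X) p := by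
    rw [hp, ← Polynomial.aeval_algHom_apply, ← Polynomial.aeval_algHom_apply]
    congr 1
    rw [Aux16.weylRefl_X, if_pos rfl, map_sub, hΦlast, hroot, zero_sub, map_neg, neg_mul]
  rw [hf (Fin.last n), h1] at h2
  have hdeg : p.natDegree = 0 := by
    have hc : p.comp (Polynomial.C (-(A j₀.castSucc (Fin.last n) : ℚ)) * Polynomial.X)
        = Polynomial.C (p.coeff 0) := by
      rw [Polynomial.comp_eq_aeval]; exact h2.symm
    have hd := congrArg Polynomial.natDegree hc
    rwa [Polynomial.natDegree_comp,
      Polynomial.natDegree_C_mul_X _ (neg_ne_zero.mpr (by exact_mod_cast ha)),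
      mul_one, Polynomial.natDegree_C] at hd
  have hpc := Polynomial.eq_C_of_natDegree_eq_zero hdeg
  refine ⟨p.coeff 0, ?_⟩
  rw [hp]
  conv_lhs => rw [hpc]
  rw [Polynomial.aeval_C, MvPolynomial.algebraMap_eq]
end

section
/- Let A be an n×n indecomposable Cartan matrix of indefinite type that is not hyperbolic. Then there exists k ∈ {1,…,n} such that the (n−1)×(n−1) principal submatrix of A obtained by deleting row and column k is an indecomposable Cartan matrix of indefinite type. -/
open MvPolynomial Matrix

/-- `A` is hyperbolic: of indefinite type, and every proper (nonempty) principal submatrix is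
of finite or affine type. -/
def Hyperbolic {ι : Type*} [Fintype ι] [DecidableEq ι] (A : Matrix ι ι ℤ) : Prop :=
  IndefiniteType A ∧ ∀ S : Finset ι, S.Nonempty → S ≠ Finset.univ →
    FiniteType (A.submatrix (fun i : S => (i : ι)) (fun i : S => (i : ι))) ∨
    AffineType (A.submatrix (fun i : S => (i : ι)) (fun i : S => (i : ι)))

set_option linter.unusedSectionVars false
set_option linter.unusedVariables false

namespace CMaux
open Relation Finset
variable {ι : Type*} [Fintype ι] [DecidableEq ι]

noncomputable def q (A : Matrix ι ι ℤ) (x : ι → ℝ) : ℝ :=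
  x ⬝ᵥ ((A.map (Int.cast : ℤ → ℝ)) *ᵥ x)

lemma q_eq (A : Matrix ι ι ℤ) (x : ι → ℝ) :
    q A x = ∑ i, ∑ j, x i * ((A i j : ℝ) * x j) := by
  simp [q, Matrix.mulVec, dotProduct, Matrix.map_apply, Finset.mul_sum]

def Adj (A : Matrix ι ι ℤ) (i j : ι) : Prop := i ≠ j ∧ A i j ≠ 0

lemma adj_symm {A : Matrix ι ι ℤ} (hA : IsCartanMatrix A) {i j : ι} (h : Adj A i j) :
    Adj A j i := ⟨h.1.symm, fun h0 => h.2 (hA.2.2 j i h0)⟩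

def step (A : Matrix ι ι ℤ) (S : Finset ι) (u v : ι) : Prop := u ∈ S ∧ v ∈ S ∧ Adj A u v

def Conn (A : Matrix ι ι ℤ) (S : Finset ι) : Prop :=
  ∀ a ∈ S, ∀ b ∈ S, ReflTransGen (step A S) a b

def NFin (A : Matrix ι ι ℤ) (S : Finset ι) : Prop :=
  ∃ x : ι → ℝ, x ≠ 0 ∧ (∀ i ∉ S, x i = 0) ∧ q A x ≤ 0

lemma exists_boundary {r : ι → ι → Prop} {P : ι → Prop} {a b : ι}
    (h : ReflTransGen r a b) (ha : P a) (hb : ¬P b) :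
    ∃ u v, P u ∧ ¬P v ∧ r u v := by
  induction h with
  | refl => exact absurd ha hb
  | @tail u w hau huw ih =>
    by_cases hu : P u
    · exact ⟨u, w, hu, hb, huw⟩
    · exact ih hu

lemma rtg_adj_univ {A : Matrix ι ι ℤ} (hA : IsCartanMatrix A) (hind : Indecomposable A)
    (s t : ι) : ReflTransGen (Adj A) s t := by
  by_contra h
  apply hind
  refine ⟨{x | ReflTransGen (Adj A) s x}, {x | ¬ReflTransGen (Adj A) s x},
    ⟨s, ReflTransGen.refl⟩, ⟨t, h⟩, ?_, ?_, ?_⟩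
  · exact Set.disjoint_left.mpr fun x hx hx' => hx' hx
  · exact Set.eq_univ_iff_forall.mpr fun x => (em _).elim Or.inl Or.inr
  · intro i hi j hj
    by_contra h0
    rcases eq_or_ne i j with rfl | hne
    · exact hj hi
    · exact hj (hi.tail ⟨hne, h0⟩)

lemma conn_insert {A : Matrix ι ι ℤ} (hA : IsCartanMatrix A) {S : Finset ι}
    (hS : Conn A S) {u v : ι} (hu : u ∈ S) (hadj : Adj A u v) : Conn A (insert v S) := by
  have mono : ∀ {a b : ι}, ReflTransGen (step A S) a b →
      ReflTransGen (step A (insert v S)) a b := fun h => by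
    induction h with
    | refl => exact ReflTransGen.refl
    | tail _ hxy ih => exact ih.tail ⟨mem_insert_of_mem hxy.1, mem_insert_of_mem hxy.2.1, hxy.2.2⟩
  have key : ∀ c ∈ S, ReflTransGen (step A (insert v S)) v c := fun c hc =>
    ReflTransGen.head ⟨mem_insert_self _ _, mem_insert_of_mem hu, adj_symm hA hadj⟩
      (mono (hS u hu c hc))
  have key2 : ∀ c ∈ S, ReflTransGen (step A (insert v S)) c v := fun c hc =>
    ReflTransGen.tail (mono (hS c hc u hu)) ⟨mem_insert_of_mem hu, mem_insert_self _ _, hadj⟩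
  intro a ha b hb
  rcases mem_insert.mp ha with rfl | ha'
  · rcases mem_insert.mp hb with rfl | hb'
    · exact ReflTransGen.refl
    · exact key b hb'
  · rcases mem_insert.mp hb with rfl | hb'
    · exact key2 a ha'
    · exact mono (hS a ha' b hb')

lemma grow {A : Matrix ι ι ℤ} (hA : IsCartanMatrix A)
    (hglob : ∀ s t : ι, ReflTransGen (Adj A) s t) :
    ∀ m (S : Finset ι), S.Nonempty → Conn A S → S.card + m ≤ Fintype.card ι →
    ∃ T, S ⊆ T ∧ T.Nonempty ∧ Conn A T ∧ T.card = S.card + m := by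
  intro m
  induction m with
  | zero => exact fun S h1 h2 _ => ⟨S, subset_rfl, h1, h2, rfl⟩
  | succ m ih =>
    intro S hne hconn hcard
    have hSuniv : S ≠ univ := by
      intro h
      rw [h, card_univ] at hcard
      omega
    obtain ⟨t, ht⟩ : ∃ t, t ∉ S := by
      by_contra h
      push_neg at h
      exact hSuniv (eq_univ_iff_forall.mpr h)
    obtain ⟨s, hs⟩ := hne
    obtain ⟨u, v, hu, hv, huv⟩ := exists_boundary (P := (· ∈ S)) (hglob s t) hs ht
    obtain ⟨T, hsub, hTne, hTconn, hTcard⟩ := ih (insert v S) ⟨v, mem_insert_self _ _⟩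
      (conn_insert hA hconn hu huv)
      (by rw [card_insert_of_notMem hv]; omega)
    exact ⟨T, (subset_insert v S).trans hsub, hTne, hTconn,
      by rw [hTcard, card_insert_of_notMem hv]; omega⟩

lemma double_sum_support (S : Finset ι) (g : ι → ι → ℝ)
    (hg : ∀ i j, i ∉ S ∨ j ∉ S → g i j = 0) :
    ∑ i, ∑ j, g i j = ∑ a : S, ∑ b : S, g a b := by
  have h1 : ∑ i, ∑ j, g i j = ∑ i ∈ S, ∑ j, g i j := by
    refine (Finset.sum_subset (subset_univ S) ?_).symm
    intro i _ hi
    exact Finset.sum_eq_zero fun j _ => hg i j (Or.inl hi)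
  have h2 : ∀ i ∈ S, ∑ j, g i j = ∑ j ∈ S, g i j := by
    intro i _
    refine (Finset.sum_subset (subset_univ S) ?_).symm
    intro j _ hj
    exact hg i j (Or.inr hj)
  rw [h1, Finset.sum_congr rfl h2]
  rw [← Finset.sum_coe_sort S (fun i => ∑ j ∈ S, g i j)]
  exact Finset.sum_congr rfl fun a _ => (Finset.sum_coe_sort S (fun j => g a j)).symm

lemma nfin_subtype {A : Matrix ι ι ℤ} {S : Finset ι}
    (hnf : ¬FiniteType (A.submatrix (fun i : S => (i : ι)) (fun i : S => (i : ι)))) :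
    NFin A S := by
  classical
  unfold FiniteType at hnf
  push_neg at hnf
  obtain ⟨w, hw0, hw⟩ := hnf
  set x : ι → ℝ := fun i => if h : i ∈ S then w ⟨i, h⟩ else 0 with hxdef
  have hxa : ∀ a : S, x a = w a := fun a => by simp [hxdef, a.2]
  have hsupp : ∀ i ∉ S, x i = 0 := fun i hi => by simp [hxdef, hi]
  have hq : q A x = w ⬝ᵥ (((A.submatrix (fun i : S => (i : ι)) (fun i : S => (i : ι))).map
      (Int.cast : ℤ → ℝ)) *ᵥ w) := by
    rw [q_eq, double_sum_support S _ ?side]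
    case side =>
      intro i j hij
      rcases hij with hi | hj
      · simp [hsupp i hi]
      · simp [hsupp j hj]
    simp only [Matrix.mulVec, dotProduct, Matrix.map_apply, Matrix.submatrix_apply,
      Finset.mul_sum]
    exact Finset.sum_congr rfl fun a _ => Finset.sum_congr rfl fun b _ => by rw [hxa, hxa]
  refine ⟨x, ?_, hsupp, ?_⟩
  · intro h0
    apply hw0
    funext a
    have := congrFun h0 a
    rw [hxa] at this
    exact this
  · rw [hq]; exact hw

lemma q_zero (A : Matrix ι ι ℤ) : q A (0 : ι → ℝ) = 0 := by simp [q]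

lemma nfin_split {A : Matrix ι ι ℤ} (hA : IsCartanMatrix A) {S : Finset ι}
    (hnf : NFin A S) (hnc : ¬Conn A S) :
    ∃ B, B ⊆ S ∧ B.Nonempty ∧ B.card < S.card ∧ NFin A B := by
  classical
  unfold Conn at hnc
  push_neg at hnc
  obtain ⟨a, ha, b, hb, hab⟩ := hnc
  set B := S.filter (fun v => ReflTransGen (step A S) a v) with hBdef
  have haB : a ∈ B := mem_filter.mpr ⟨ha, ReflTransGen.refl⟩
  have hbB : b ∉ B := fun h => hab (mem_filter.mp h).2
  have hedge : ∀ u ∈ B, ∀ v ∈ S, v ∉ B → A u v = 0 ∧ A v u = 0 := by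
    intro u hu v hv hvB
    have hnadj : ¬Adj A u v := fun hadj =>
      hvB (mem_filter.mpr ⟨hv, ((mem_filter.mp hu).2).tail ⟨(mem_filter.mp hu).1, hv, hadj⟩⟩)
    have hne : u ≠ v := fun h => hvB (h ▸ hu)
    have h1 : A u v = 0 := by
      by_contra h0
      exact hnadj ⟨hne, h0⟩
    exact ⟨h1, hA.2.2 u v h1⟩
  obtain ⟨x, hx0, hxs, hxq⟩ := hnf
  set xB : ι → ℝ := fun i => if i ∈ B then x i else 0 with hxBdef
  set xC : ι → ℝ := fun i => if i ∈ B then 0 else x i with hxCdef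
  have hiS : ∀ i, x i ≠ 0 → i ∈ S := fun i h => by
    by_contra h'
    exact h (hxs i h')
  have hq : q A x = q A xB + q A xC := by
    rw [q_eq, q_eq, q_eq, ← Finset.sum_add_distrib]
    refine Finset.sum_congr rfl fun i _ => ?_
    rw [← Finset.sum_add_distrib]
    refine Finset.sum_congr rfl fun j _ => ?_
    by_cases hi : i ∈ B <;> by_cases hj : j ∈ B <;> simp only [hxBdef, hxCdef, if_pos, if_neg,
      hi, hj, ite_true, ite_false, mul_zero, zero_mul, add_zero, zero_add]
    · by_cases hxj : x j = 0
      · simp [hxj]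
      · have := (hedge i hi j (hiS j hxj) hj).1
        simp [this]
    · by_cases hxi : x i = 0
      · simp [hxi]
      · have := (hedge j hj i (hiS i hxi) hi).2
        simp [this]
  have hBS : B ⊆ S := filter_subset _ _
  have hcardB : B.card < S.card := card_lt_card ⟨hBS, fun h => hbB (h hb)⟩
  have hcardC : (S \ B).card < S.card :=
    card_lt_card ⟨sdiff_subset, fun h => ((mem_sdiff.mp (h ha)).2) haB⟩
  have hsuppB : ∀ i ∉ B, xB i = 0 := fun i hi => by simp [hxBdef, hi]
  have hsuppC : ∀ i ∉ S \ B, xC i = 0 := by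
    intro i hi
    by_cases hiB : i ∈ B
    · simp [hxCdef, hiB]
    · have hiS' : i ∉ S := fun h => hi (mem_sdiff.mpr ⟨h, hiB⟩)
      simp [hxCdef, hiB, hxs i hiS']
  by_cases hxB0 : xB = 0
  · have hxCx : xC = x := by
      funext i
      by_cases h : i ∈ B
      · have h1 : x i = 0 := by
          have := congrFun hxB0 i
          simpa [hxBdef, h] using this
        simp [hxCdef, h, h1]
      · simp [hxCdef, h]
    exact ⟨S \ B, sdiff_subset, ⟨b, mem_sdiff.mpr ⟨hb, hbB⟩⟩, hcardC,
      ⟨xC, hxCx ▸ hx0, hsuppC, by rw [hxCx]; exact hxq⟩⟩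
  · by_cases hqB : q A xB ≤ 0
    · exact ⟨B, hBS, ⟨a, haB⟩, hcardB, ⟨xB, hxB0, hsuppB, hqB⟩⟩
    · have hqC : q A xC < 0 := by
        push_neg at hqB
        linarith [hq]
      have hxC0 : xC ≠ 0 := by
        intro h
        rw [h, q_zero] at hqC
        exact lt_irrefl _ hqC
      exact ⟨S \ B, sdiff_subset, ⟨b, mem_sdiff.mpr ⟨hb, hbB⟩⟩, hcardC,
        ⟨xC, hxC0, hsuppC, le_of_lt hqC⟩⟩

lemma not_affine_aux {A : Matrix ι ι ℤ} (hA : IsCartanMatrix A) {T : Finset ι}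
    (hconn : Conn A T)
    (hPSD : ∀ z : ι → ℝ, (∀ i ∉ T, z i = 0) → 0 ≤ q A z)
    {x : ι → ℝ} (hx0 : x ≠ 0) (hxT : ∀ i ∉ T, x i = 0) (hxq : q A x ≤ 0)
    {t₀ : ι} (ht₀ : t₀ ∈ T) (hxt₀ : x t₀ = 0) : False := by
  classical
  set M : Matrix ι ι ℝ := A.map (Int.cast : ℤ → ℝ) with hMdef
  have hMo : ∀ i j : ι, i ≠ j → M i j ≤ 0 := by
    intro i j hij
    have := hA.2.1 i j hij
    simp only [hMdef, Matrix.map_apply]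
    exact_mod_cast this
  have hqx : q A x = 0 := le_antisymm hxq (hPSD x hxT)
  set y : ι → ℝ := fun i => |x i| with hydef
  have hyT : ∀ i ∉ T, y i = 0 := fun i hi => by simp [hydef, hxT i hi]
  have hqy_le : q A y ≤ q A x := by
    rw [q_eq, q_eq]
    refine Finset.sum_le_sum fun i _ => Finset.sum_le_sum fun j _ => ?_
    rcases eq_or_ne i j with rfl | hij
    · simp only [hydef, hA.1 i]
      push_cast
      nlinarith [abs_mul_abs_self (x i)]
    · have hc : (A i j : ℝ) ≤ 0 := by
        have := hMo i j hij
        simpa [hMdef, Matrix.map_apply] using this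
      have h1 : x i * x j ≤ |x i| * |x j| := by
        rw [← abs_mul]
        exact le_abs_self _
      have h2 : (A i j : ℝ) * (|x i| * |x j|) ≤ (A i j : ℝ) * (x i * x j) :=
        mul_le_mul_of_nonpos_left h1 hc
      simp only [hydef]
      nlinarith [h2]
  have hqy : q A y = 0 := le_antisymm (by linarith) (hPSD y hyT)
  have hqM : ∀ z : ι → ℝ, q A z = z ⬝ᵥ (M *ᵥ z) := fun z => rfl
  have hbil : ∀ z : ι → ℝ, (∀ i ∉ T, z i = 0) →
      y ⬝ᵥ (M *ᵥ z) + z ⬝ᵥ (M *ᵥ y) = 0 := by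
    intro z hz
    set c : ℝ := y ⬝ᵥ (M *ᵥ z) + z ⬝ᵥ (M *ᵥ y) with hcdef
    set d : ℝ := z ⬝ᵥ (M *ᵥ z) with hddef
    have hd : 0 ≤ d := hPSD z hz
    have key : ∀ t : ℝ, 0 ≤ t * c + t ^ 2 * d := by
      intro t
      have hsupport : ∀ i ∉ T, (y + t • z) i = 0 := fun i hi => by
        simp [hyT i hi, hz i hi]
      have h0 := hPSD (y + t • z) hsupport
      have hexp : q A (y + t • z) = q A y + (t * c + t ^ 2 * d) := by
        rw [hqM, hqM]
        simp only [Matrix.mulVec_add, Matrix.mulVec_smul, dotProduct_add, add_dotProduct,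
          dotProduct_smul, smul_dotProduct, smul_eq_mul, hcdef, hddef]
        ring
      rw [hexp, hqy] at h0
      linarith
    have hd1 : (0:ℝ) < d + 1 := by linarith
    set t : ℝ := -c / (d + 1) with htdef
    have hct : c = -(t * (d + 1)) := by
      rw [htdef]
      field_simp
    have h := key t
    rw [hct] at h
    have ht2 : t ^ 2 ≤ 0 := by nlinarith [h]
    have ht0 : t = 0 := by
      have h4 := le_antisymm ht2 (sq_nonneg t)
      exact sq_eq_zero_iff.mp h4
    rw [hct, ht0]
    ring
  have hsingle : ∀ v ∈ T, ∑ j, ((M j v + M v j) * y j) = 0 := by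
    intro v hv
    have hz : ∀ i ∉ T, (Pi.single v (1:ℝ) : ι → ℝ) i = 0 := by
      intro i hi
      have hiv : i ≠ v := by rintro rfl; exact hi hv
      simp [Pi.single_eq_of_ne hiv]
    have h := hbil (Pi.single v 1) hz
    have h1 : y ⬝ᵥ (M *ᵥ Pi.single v 1) = ∑ j, y j * M j v := by
      rw [Matrix.mulVec_single]
      simp [dotProduct]
    have h2 : Pi.single v (1:ℝ) ⬝ᵥ (M *ᵥ y) = ∑ j, M v j * y j := by
      rw [single_dotProduct]
      simp [Matrix.mulVec, dotProduct]
    rw [h1, h2, ← Finset.sum_add_distrib] at h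
    rw [← h]
    exact Finset.sum_congr rfl fun j _ => by ring
  have hnoedge : ∀ u v : ι, v ∈ T → y v = 0 → y u ≠ 0 → ¬Adj A u v := by
    intro u v hv hyv hyu hadj
    have hsum := hsingle v hv
    have hterms : ∀ j ∈ Finset.univ, (M j v + M v j) * y j ≤ 0 := by
      intro j _
      rcases eq_or_ne j v with rfl | hjv
      · simp [hyv]
      · have h1 := hMo j v hjv
        have h2 := hMo v j hjv.symm
        have h3 : (0:ℝ) ≤ y j := abs_nonneg _
        exact mul_nonpos_of_nonpos_of_nonneg (by linarith) h3
    have hall := (Finset.sum_eq_zero_iff_of_nonpos hterms).mp hsum u (Finset.mem_univ u)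
    have hune : u ≠ v := fun h => hyu (h ▸ hyv)
    have h1 : M u v + M v u = 0 := by
      rcases mul_eq_zero.mp hall with h | h
      · exact h
      · exact absurd h hyu
    have h2 : M u v = 0 :=
      le_antisymm (hMo u v hune) (by linarith [hMo v u hune.symm])
    apply hadj.2
    have : ((A u v : ℤ) : ℝ) = 0 := by simpa [hMdef, Matrix.map_apply] using h2
    exact_mod_cast this
  obtain ⟨s, hs⟩ : ∃ s, x s ≠ 0 := by
    by_contra h
    push_neg at h
    exact hx0 (funext h)
  have hsT : s ∈ T := by
    by_contra h
    exact hs (hxT s h)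
  have hys : y s ≠ 0 := by simpa [hydef] using hs
  have hyt₀ : y t₀ = 0 := by simp [hydef, hxt₀]
  obtain ⟨u, v, hyu, hyv, hstep⟩ :=
    exists_boundary (r := step A T) (P := fun i => y i ≠ 0) (hconn s hsT t₀ ht₀) hys
      (not_not.mpr hyt₀)
  exact hnoedge u v hstep.2.1 (not_not.mp hyv) hyu hstep.2.2

lemma q_succAbove {n : ℕ} (A : Matrix (Fin (n+1)) (Fin (n+1)) ℤ) (k : Fin (n+1))
    (x : Fin (n+1) → ℝ) (hk : x k = 0) :
    (x ∘ k.succAbove) ⬝ᵥ (((A.submatrix k.succAbove k.succAbove).map (Int.cast : ℤ → ℝ)) *ᵥ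
      (x ∘ k.succAbove)) = q A x := by
  have hL : (x ∘ k.succAbove) ⬝ᵥ (((A.submatrix k.succAbove k.succAbove).map
      (Int.cast : ℤ → ℝ)) *ᵥ (x ∘ k.succAbove)) =
      ∑ a : Fin n, ∑ b : Fin n, x (k.succAbove a) *
        ((A (k.succAbove a) (k.succAbove b) : ℝ) * x (k.succAbove b)) := by
    simp [Matrix.mulVec, dotProduct, Matrix.map_apply, Matrix.submatrix_apply,
      Finset.mul_sum, Function.comp]
  rw [hL, q_eq]
  rw [Fin.sum_univ_succAbove (fun i => ∑ j, x i * ((A i j : ℝ) * x j)) k]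
  simp only [hk, zero_mul, Finset.sum_const_zero, zero_add]
  refine Finset.sum_congr rfl fun a _ => ?_
  rw [Fin.sum_univ_succAbove (fun j => x (k.succAbove a) * ((A (k.succAbove a) j : ℝ) * x j)) k]
  simp [hk]

lemma q_reindex {κ κ' : Type*} [Fintype κ] [Fintype κ'] [DecidableEq κ] [DecidableEq κ']
    (M : Matrix κ κ ℤ) (e : κ' ≃ κ) (w : κ' → ℝ) :
    w ⬝ᵥ (((M.submatrix e e).map (Int.cast : ℤ → ℝ)) *ᵥ w) =
      (w ∘ e.symm) ⬝ᵥ ((M.map (Int.cast : ℤ → ℝ)) *ᵥ (w ∘ e.symm)) := by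
  have hR : (w ∘ e.symm) ⬝ᵥ ((M.map (Int.cast : ℤ → ℝ)) *ᵥ (w ∘ e.symm)) =
      ∑ i, ∑ j, w (e.symm i) * ((M i j : ℝ) * w (e.symm j)) := by
    simp [Matrix.mulVec, dotProduct, Matrix.map_apply, Finset.mul_sum, Function.comp]
  rw [hR]
  rw [← Equiv.sum_comp e (fun i => ∑ j, w (e.symm i) * ((M i j : ℝ) * w (e.symm j)))]
  have hL : w ⬝ᵥ (((M.submatrix e e).map (Int.cast : ℤ → ℝ)) *ᵥ w) =
      ∑ a, ∑ b, w a * ((M (e a) (e b) : ℝ) * w b) := by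
    simp [Matrix.mulVec, dotProduct, Matrix.map_apply, Matrix.submatrix_apply, Finset.mul_sum]
  rw [hL]
  refine Finset.sum_congr rfl fun a _ => ?_
  rw [← Equiv.sum_comp e (fun j => w (e.symm (e a)) * ((M (e a) j : ℝ) * w (e.symm j)))]
  simp [Equiv.symm_apply_apply]

lemma finiteType_of_reindex {κ κ' : Type*} [Fintype κ] [Fintype κ'] [DecidableEq κ]
    [DecidableEq κ'] (M : Matrix κ κ ℤ) (e : κ' ≃ κ)
    (h : FiniteType (M.submatrix e e)) : FiniteType M := by
  intro x hx0
  have hw0 : x ∘ e ≠ 0 := by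
    intro h0
    apply hx0
    funext i
    have := congrFun h0 (e.symm i)
    simpa using this
  have := h (x ∘ e) hw0
  rw [q_reindex M e (x ∘ e)] at this
  have hxe : (x ∘ e) ∘ e.symm = x := by
    funext i
    simp
  rwa [hxe] at this

lemma affineType_of_reindex {κ κ' : Type*} [Fintype κ] [Fintype κ'] [DecidableEq κ]
    [DecidableEq κ'] (M : Matrix κ κ ℤ) (e : κ' ≃ κ)
    (h : AffineType (M.submatrix e e)) : AffineType M := by
  constructor
  · intro x
    have := h.1 (x ∘ e)
    rw [q_reindex M e (x ∘ e)] at this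
    have hxe : (x ∘ e) ∘ e.symm = x := by
      funext i
      simp
    rwa [hxe] at this
  · have hr := h.2
    rw [← Matrix.submatrix_map (Int.cast : ℤ → ℝ) (⇑e) (⇑e) M] at hr
    rw [Matrix.rank_submatrix (M.map (Int.cast : ℤ → ℝ)) e e] at hr
    rw [hr, Fintype.card_congr e]

lemma indec_submatrix {n : ℕ} (A : Matrix (Fin (n+1)) (Fin (n+1)) ℤ) (hA : IsCartanMatrix A)
    (k : Fin (n+1)) (hconn : Conn A (Finset.univ.erase k)) :
    Indecomposable (A.submatrix k.succAbove k.succAbove) := by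
  rintro ⟨I, J, ⟨a, haI⟩, ⟨b, hbJ⟩, hdisj, huniv, hzero⟩
  have hmem : ∀ c : Fin n, k.succAbove c ∈ Finset.univ.erase k := fun c =>
    Finset.mem_erase.mpr ⟨Fin.succAbove_ne k c, Finset.mem_univ _⟩
  have hpath := hconn (k.succAbove a) (hmem a) (k.succAbove b) (hmem b)
  have main : ∀ w, ReflTransGen (step A (Finset.univ.erase k)) (k.succAbove a) w →
      ∀ c : Fin n, k.succAbove c = w → c ∈ I := by
    intro w h
    induction h with
    | refl =>
      intro c hc
      have : c = a := Fin.succAbove_right_injective hc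
      exact this ▸ haI
    | @tail u w' hau huw ih =>
      intro c hc
      obtain ⟨hu_mem, hv_mem, hadj⟩ := huw
      obtain ⟨c', hc'⟩ := Fin.exists_succAbove_eq (Finset.mem_erase.mp hu_mem).1
      have hc'I : c' ∈ I := ih c' hc'
      have hcIJ : c ∈ I ∪ J := huniv ▸ Set.mem_univ c
      rcases hcIJ with hcI | hcJ
      · exact hcI
      · exfalso
        have h0 := hzero c' hc'I c hcJ
        rw [Matrix.submatrix_apply, hc', hc] at h0
        exact hadj.2 h0
  have hbI := main (k.succAbove b) hpath b rfl
  exact absurd hbJ (Set.disjoint_left.mp hdisj hbI)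

end CMaux

/-- an indecomposable, indefinite, non-hyperbolic Cartan matrix has a principal
submatrix of corank one (delete row and column `k`) that is indecomposable and indefinite. -/
theorem exists_indecomposable_indefinite_principal_submatrix {n : ℕ}
    (A : Matrix (Fin (n + 1)) (Fin (n + 1)) ℤ) (hA : IsCartanMatrix A)
    (hind : Indecomposable A) (hidf : IndefiniteType A) (hnh : ¬Hyperbolic A) :
    ∃ k : Fin (n + 1),
      Indecomposable (A.submatrix k.succAbove k.succAbove) ∧
      IndefiniteType (A.submatrix k.succAbove k.succAbove) := by
  classical
  open CMaux in
  -- extract the non-finite, non-affine proper principal submatrix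
  rw [Hyperbolic] at hnh
  push_neg at hnh
  obtain ⟨Sstar, hSne, hSneu, hSfin, hSaff⟩ := hnh hidf
  have hNFstar : CMaux.NFin A Sstar := CMaux.nfin_subtype hSfin
  have hglob := CMaux.rtg_adj_univ hA hind
  -- minimal non-finite proper subset
  have hfam : ∃ m, ∃ S : Finset (Fin (n+1)),
      (S.Nonempty ∧ S ≠ Finset.univ ∧ CMaux.NFin A S) ∧ S.card = m :=
    ⟨_, Sstar, ⟨hSne, hSneu, hNFstar⟩, rfl⟩
  obtain ⟨S₀, ⟨hS₀ne, hS₀u, hS₀nf⟩, hS₀card⟩ := Nat.find_spec hfam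
  have hmin : ∀ S' : Finset (Fin (n+1)), S'.Nonempty → S' ≠ Finset.univ → CMaux.NFin A S' →
      S₀.card ≤ S'.card := by
    intro S' h1 h2 h3
    rw [hS₀card]
    exact Nat.find_min' hfam ⟨S', ⟨h1, h2, h3⟩, rfl⟩
  have hcard_le : ∀ S : Finset (Fin (n+1)), S ≠ Finset.univ → S.card ≤ n := by
    intro S hS
    have h := Finset.card_lt_card (Finset.ssubset_univ_iff.mpr hS)
    rw [Finset.card_univ, Fintype.card_fin] at h
    omega
  have hS₀conn : CMaux.Conn A S₀ := by
    by_contra h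
    obtain ⟨B, hBsub, hBne, hBcard, hBnf⟩ := CMaux.nfin_split hA hS₀nf h
    have hBu : B ≠ Finset.univ := by
      intro h0
      have h1 : S₀.card ≤ n := hcard_le S₀ hS₀u
      have h2 := Finset.card_le_card hBsub
      have h3 : B.card = n + 1 := by rw [h0, Finset.card_univ, Fintype.card_fin]
      omega
    exact absurd (hmin B hBne hBu hBnf) (not_le.mpr hBcard)
  -- helper to convert a Finset of card n into an erased point
  have hcompl : ∀ T : Finset (Fin (n+1)), T.card = n →
      ∃ k : Fin (n+1), (∀ i, i ∈ T ↔ i ≠ k) ∧ T = Finset.univ.erase k := by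
    intro T hT
    have h1 : (Finset.univ \ T).card = 1 := by
      rw [Finset.card_sdiff_of_subset (Finset.subset_univ T), Finset.card_univ, Fintype.card_fin]
      omega
    obtain ⟨k, hk⟩ := Finset.card_eq_one.mp h1
    have hmem : ∀ i, i ∈ T ↔ i ≠ k := by
      intro i
      constructor
      · intro hi hik
        have hmemk : k ∈ Finset.univ \ T := by
          rw [hk]; exact Finset.mem_singleton_self k
        exact (Finset.mem_sdiff.mp hmemk).2 (hik ▸ hi)
      · intro hik
        by_contra h
        have : i ∈ Finset.univ \ T := Finset.mem_sdiff.mpr ⟨Finset.mem_univ i, h⟩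
        rw [hk, Finset.mem_singleton] at this
        exact hik this
    refine ⟨k, hmem, ?_⟩
    ext i
    rw [Finset.mem_erase, hmem i]
    simp
  rcases lt_or_eq_of_le (hcard_le S₀ hS₀u) with hlt | heq
  · -- grow S₀ to a connected set of size n
    obtain ⟨T, hsub, hTne, hTconn, hTcard⟩ := CMaux.grow hA hglob (n - S₀.card) S₀ hS₀ne hS₀conn
      (by rw [Fintype.card_fin]; omega)
    have hTcard' : T.card = n := by omega
    obtain ⟨k, hmem, hTerase⟩ := hcompl T hTcard'
    have hkT : k ∉ T := fun h => (hmem k).mp h rfl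
    obtain ⟨x, hx0, hxsupp, hxq⟩ := hS₀nf
    have hxT : ∀ i ∉ T, x i = 0 := fun i hi => hxsupp i (fun hiS => hi (hsub hiS))
    have hxk : x k = 0 := hxT k hkT
    refine ⟨k, CMaux.indec_submatrix A hA k (hTerase ▸ hTconn), ?_, ?_⟩
    · intro hfin
      have hw0 : x ∘ k.succAbove ≠ 0 := by
        obtain ⟨s, hs⟩ : ∃ s, x s ≠ 0 := by
          by_contra h
          push_neg at h
          exact hx0 (funext h)
        have hsk : s ≠ k := fun h => hs (h ▸ hxk)
        obtain ⟨j, hj⟩ := Fin.exists_succAbove_eq hsk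
        intro h0
        apply hs
        rw [← hj]
        exact congrFun h0 j
      have := hfin _ hw0
      rw [CMaux.q_succAbove A k x hxk] at this
      have hqx : CMaux.q A x ≤ 0 := hxq
      rw [CMaux.q] at hqx
      linarith
    · intro haff
      have hPSD : ∀ z : Fin (n+1) → ℝ, (∀ i ∉ T, z i = 0) → 0 ≤ CMaux.q A z := by
        intro z hz
        have hzk : z k = 0 := hz k hkT
        have := haff.1 (z ∘ k.succAbove)
        rw [CMaux.q_succAbove A k z hzk] at this
        exact this
      have hTS : (T \ S₀).Nonempty := by
        rw [Finset.sdiff_nonempty]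
        intro hsub'
        have := Finset.card_le_card hsub'
        omega
      obtain ⟨t₀, ht₀⟩ := hTS
      exact CMaux.not_affine_aux hA hTconn hPSD hx0 hxT hxq (Finset.mem_sdiff.mp ht₀).1
        (hxsupp t₀ (Finset.mem_sdiff.mp ht₀).2)
  · -- S₀.card = n : then Sstar.card = n, Sstar is connected, transport along reindexing
    have hstar_le : Sstar.card ≤ n := hcard_le Sstar hSneu
    have hstar_card : Sstar.card = n := by
      have := hmin Sstar hSne hSneu hNFstar
      omega
    have hstar_conn : CMaux.Conn A Sstar := by
      by_contra h
      obtain ⟨B, hBsub, hBne, hBcard, hBnf⟩ := CMaux.nfin_split hA hNFstar h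
      have hBu : B ≠ Finset.univ := by
        intro h0
        have h2 := Finset.card_le_card hBsub
        have h3 : B.card = n + 1 := by rw [h0, Finset.card_univ, Fintype.card_fin]
        omega
      have := hmin B hBne hBu hBnf
      omega
    obtain ⟨k, hmem, hSerase⟩ := hcompl Sstar hstar_card
    have hmem' : ∀ j : Fin n, k.succAbove j ∈ Sstar := fun j =>
      (hmem _).mpr (Fin.succAbove_ne k j)
    let e : Fin n ≃ {i // i ∈ Sstar} := Equiv.ofBijective
      (fun j => ⟨k.succAbove j, hmem' j⟩)
      ⟨fun a b hab => Fin.succAbove_right_injective (congrArg Subtype.val hab),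
       fun ⟨i, hi⟩ => by
        obtain ⟨j, hj⟩ := Fin.exists_succAbove_eq ((hmem i).mp hi)
        exact ⟨j, Subtype.ext hj⟩⟩
    have hBsub : A.submatrix k.succAbove k.succAbove =
        (A.submatrix (fun i : Sstar => (i : Fin (n+1)))
          (fun i : Sstar => (i : Fin (n+1)))).submatrix e e := rfl
    refine ⟨k, CMaux.indec_submatrix A hA k (hSerase ▸ hstar_conn), ?_, ?_⟩
    · intro hfin
      rw [hBsub] at hfin
      exact hSfin (CMaux.finiteType_of_reindex _ e hfin)
    · intro haff
      rw [hBsub] at haff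
      exact hSaff (CMaux.affineType_of_reindex _ e haff)
end
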